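/- arXiv:1610.03196 — 17 statements merged into one kernel-verified Lean document; each statement's English description precedes it below -/
import Mathlib

section
/- Let A be an n×n symmetric real matrix, M an n×n symmetric real matrix, B an m×n real matrix and C an n×m real matrix with A·C = 0, M·C = Bᵀ, L := B·C invertible, and A + Bᵀ·L⁻¹·B invertible. Set V := (A + Bᵀ·L⁻¹·B)⁻¹·(I − Bᵀ·L⁻¹·Cᵀ). Then V·A = I − C·L⁻¹·B, V·Bᵀ = 0, A·V = I − Bᵀ·L⁻¹·Cᵀ, and B·V = 0. -/
open Matrix

theorem stmt1 {n m : ℕ} (hn : 0 < n) (hm : 0 < m)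
    (A M : Matrix (Fin n) (Fin n) ℝ) (B : Matrix (Fin m) (Fin n) ℝ)
    (C : Matrix (Fin n) (Fin m) ℝ)
    (hA : Aᵀ = A) (hM : Mᵀ = M)
    (hAC : A * C = 0) (hMC : M * C = Bᵀ)
    (hL : IsUnit (B * C))
    (hInv : IsUnit (A + Bᵀ * (B * C)⁻¹ * B))
    (V : Matrix (Fin n) (Fin n) ℝ)
    (hV : V = (A + Bᵀ * (B * C)⁻¹ * B)⁻¹ * (1 - Bᵀ * (B * C)⁻¹ * Cᵀ)) :
    V * A = 1 - C * (B * C)⁻¹ * B ∧ V * Bᵀ = 0 ∧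
      A * V = 1 - Bᵀ * (B * C)⁻¹ * Cᵀ ∧ B * V = 0 := by
  set L := B * C with hLdef
  set S := A + Bᵀ * L⁻¹ * B with hSdef
  have hLdet : IsUnit L.det := (Matrix.isUnit_iff_isUnit_det _).mp hL
  have hSdet : IsUnit S.det := (Matrix.isUnit_iff_isUnit_det _).mp hInv
  have hLL : L * L⁻¹ = 1 := Matrix.mul_nonsing_inv _ hLdet
  have hLL' : L⁻¹ * L = 1 := Matrix.nonsing_inv_mul _ hLdet
  have hSS : S * S⁻¹ = 1 := Matrix.mul_nonsing_inv _ hSdet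
  have hSS' : S⁻¹ * S = 1 := Matrix.nonsing_inv_mul _ hSdet
  have hLsymm : Lᵀ = L := by
    have h1 : Lᵀ = Cᵀ * M * C := by
      rw [hLdef, transpose_mul, ← hMC, Matrix.mul_assoc]
    have h2 : (Cᵀ * M * C)ᵀ = Cᵀ * M * C := by
      simp [transpose_mul, hM, Matrix.mul_assoc]
    calc Lᵀ = Cᵀ * M * C := h1
    _ = (Cᵀ * M * C)ᵀ := h2.symm
    _ = Lᵀᵀ := by rw [h1]
    _ = L := transpose_transpose L
  have hCA : Cᵀ * A = 0 := by
    rw [← hA, ← transpose_mul, hAC, transpose_zero]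
  have hCB : Cᵀ * Bᵀ = L := by
    rw [← transpose_mul, ← hLdef, hLsymm]
  have hCS : Cᵀ * S = B := by
    rw [hSdef, Matrix.mul_add, hCA, zero_add, ← Matrix.mul_assoc, ← Matrix.mul_assoc,
      hCB, hLL, Matrix.one_mul]
  have hSsymm : Sᵀ = S := by
    rw [hSdef]
    simp only [transpose_add, transpose_mul, transpose_transpose, hA,
      Matrix.transpose_nonsing_inv, hLsymm, Matrix.mul_assoc]
  have hSC : S * C = Bᵀ := by
    have := congrArg Matrix.transpose hCS
    simpa [transpose_mul, hSsymm] using this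
  have hBSinv : B * S⁻¹ = Cᵀ := by
    calc B * S⁻¹ = Cᵀ * S * S⁻¹ := by rw [hCS]
    _ = Cᵀ * (S * S⁻¹) := by rw [Matrix.mul_assoc]
    _ = Cᵀ := by rw [hSS, Matrix.mul_one]
  have hSinvB : S⁻¹ * Bᵀ = C := by
    rw [← hSC, ← Matrix.mul_assoc, hSS', Matrix.one_mul]
  have hBV : B * V = 0 := by
    rw [hV, ← Matrix.mul_assoc, hBSinv, Matrix.mul_sub, Matrix.mul_one,
      ← Matrix.mul_assoc, ← Matrix.mul_assoc, hCB, hLL, Matrix.one_mul, sub_self]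
  have hVB : V * Bᵀ = 0 := by
    rw [hV, Matrix.mul_assoc, Matrix.sub_mul, Matrix.one_mul,
      Matrix.mul_assoc, Matrix.mul_assoc, hCB, hLL', Matrix.mul_one, sub_self,
      Matrix.mul_zero]
  have hAV : A * V = 1 - Bᵀ * L⁻¹ * Cᵀ := by
    have hSV : S * V = 1 - Bᵀ * L⁻¹ * Cᵀ := by
      rw [hV, ← Matrix.mul_assoc, hSS, Matrix.one_mul]
    have : A * V = S * V - Bᵀ * L⁻¹ * (B * V) := by
      rw [hSdef, Matrix.add_mul, Matrix.mul_assoc, add_sub_cancel_right]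
    rw [this, hBV, Matrix.mul_zero, sub_zero, hSV]
  have hVA : V * A = 1 - C * L⁻¹ * B := by
    have h1 : V * A = S⁻¹ * A := by
      rw [hV, Matrix.mul_assoc, Matrix.sub_mul, Matrix.one_mul,
        Matrix.mul_assoc, Matrix.mul_assoc, hCA, Matrix.mul_zero, Matrix.mul_zero,
        sub_zero]
    have h2 : S⁻¹ * A = 1 - C * L⁻¹ * B := by
      have : A = S - Bᵀ * L⁻¹ * B := by exact (add_sub_cancel_right A _).symm
      rw [this, Matrix.mul_sub, hSS', ← Matrix.mul_assoc, ← Matrix.mul_assoc, hSinvB]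
    rw [h1, h2]
  exact ⟨hVA, hVB, hAV, hBV⟩
end

section
/- Let A be an n×n symmetric real matrix, M an n×n symmetric real matrix, B an m×n real matrix and C an n×m real matrix with A·C = 0, M·C = Bᵀ, L := B·C invertible, and A + Bᵀ·L⁻¹·B invertible. Set V := (A + Bᵀ·L⁻¹·B)⁻¹·(I − Bᵀ·L⁻¹·Cᵀ). Then the (n+m)×(n+m) block matrix [[A, Bᵀ],[B, 0]] multiplied by the block matrix [[V, C·L⁻¹],[L⁻¹·Cᵀ, 0]] equals the identity; in particular [[A, Bᵀ],[B, 0]] is invertible with inverse [[V, C·L⁻¹],[L⁻¹·Cᵀ, 0]]. -/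
open Matrix

theorem stmt2 {n m : ℕ} (hn : 0 < n) (hm : 0 < m)
    (A M : Matrix (Fin n) (Fin n) ℝ) (B : Matrix (Fin m) (Fin n) ℝ)
    (C : Matrix (Fin n) (Fin m) ℝ)
    (hA : Aᵀ = A) (hM : Mᵀ = M)
    (hAC : A * C = 0) (hMC : M * C = Bᵀ)
    (hL : IsUnit (B * C))
    (hInv : IsUnit (A + Bᵀ * (B * C)⁻¹ * B))
    (V : Matrix (Fin n) (Fin n) ℝ)
    (hV : V = (A + Bᵀ * (B * C)⁻¹ * B)⁻¹ * (1 - Bᵀ * (B * C)⁻¹ * Cᵀ)) :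
    (Matrix.fromBlocks A Bᵀ B 0) *
        (Matrix.fromBlocks V (C * (B * C)⁻¹) ((B * C)⁻¹ * Cᵀ) 0) = 1 ∧
      IsUnit (Matrix.fromBlocks A Bᵀ B (0 : Matrix (Fin m) (Fin m) ℝ)) ∧
      (Matrix.fromBlocks A Bᵀ B (0 : Matrix (Fin m) (Fin m) ℝ))⁻¹ =
        Matrix.fromBlocks V (C * (B * C)⁻¹) ((B * C)⁻¹ * Cᵀ) 0 := by
  set L : Matrix (Fin m) (Fin m) ℝ := B * C with hLdef
  set S : Matrix (Fin n) (Fin n) ℝ := A + Bᵀ * L⁻¹ * B with hSdef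
  have hLdet : IsUnit L.det := (isUnit_iff_isUnit_det L).mp hL
  have hSdet : IsUnit S.det := (isUnit_iff_isUnit_det S).mp hInv
  have hLL : L * L⁻¹ = 1 := mul_nonsing_inv L hLdet
  have hSS : S * S⁻¹ = 1 := mul_nonsing_inv S hSdet
  have hB : B = Cᵀ * M := by
    have := congrArg Matrix.transpose hMC
    simpa [transpose_mul, hM] using this.symm
  have hLsym : Lᵀ = L := by
    rw [hLdef, transpose_mul, ← hMC, ← Matrix.mul_assoc, hB, Matrix.mul_assoc]
  have hCtB : Cᵀ * Bᵀ = L := by rw [← transpose_mul, ← hLdef, hLsym]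
  have hCtA : Cᵀ * A = 0 := by
    have := congrArg Matrix.transpose hAC
    simpa [transpose_mul, hA] using this
  have hCtS : Cᵀ * S = B := by
    simp only [hSdef, Matrix.mul_add, hCtA, zero_add, ← Matrix.mul_assoc]
    rw [hCtB, hLL, Matrix.one_mul]
  have hBS : B * S⁻¹ = Cᵀ := by
    calc B * S⁻¹ = Cᵀ * S * S⁻¹ := by rw [hCtS]
    _ = Cᵀ := by rw [Matrix.mul_assoc, hSS, Matrix.mul_one]
  have hSV : S * V = 1 - Bᵀ * L⁻¹ * Cᵀ := by
    rw [hV, ← Matrix.mul_assoc, hSS, one_mul]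
  have hBV : B * V = 0 := by
    rw [hV, ← Matrix.mul_assoc, hBS, Matrix.mul_sub, Matrix.mul_one]
    simp only [← Matrix.mul_assoc]
    rw [hCtB, hLL, Matrix.one_mul, sub_self]
  have hAeq : A = S - Bᵀ * L⁻¹ * B := by rw [hSdef, add_sub_cancel_right]
  have hAV : A * V = 1 - Bᵀ * L⁻¹ * Cᵀ := by
    rw [hAeq, Matrix.sub_mul, hSV, Matrix.mul_assoc (Bᵀ * L⁻¹) B V, hBV, Matrix.mul_zero, sub_zero]
  have hTL : A * V + Bᵀ * (L⁻¹ * Cᵀ) = 1 := by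
    rw [← Matrix.mul_assoc, hAV, sub_add_cancel]
  have hACL : A * (C * L⁻¹) = 0 := by rw [← Matrix.mul_assoc, hAC, Matrix.zero_mul]
  have hBCL : B * (C * L⁻¹) = 1 := by rw [← Matrix.mul_assoc, ← hLdef, hLL]
  have key : (Matrix.fromBlocks A Bᵀ B 0) *
      (Matrix.fromBlocks V (C * L⁻¹) (L⁻¹ * Cᵀ) 0) = 1 := by
    rw [fromBlocks_multiply, ← fromBlocks_one]
    simp [hTL, hACL, hBV, hBCL]
  refine ⟨key, ?_, inv_eq_right_inv key⟩
  have hdet : IsUnit (Matrix.fromBlocks A Bᵀ B (0 : Matrix (Fin m) (Fin m) ℝ)).det := by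
    apply IsUnit.of_mul_eq_one (Matrix.fromBlocks V (C * L⁻¹) (L⁻¹ * Cᵀ) 0).det
    rw [← det_mul, key, det_one]
  exact (isUnit_iff_isUnit_det _).mpr hdet
end

section
/- Let A be an n×n symmetric real matrix, M an n×n symmetric real matrix, B an m×n real matrix and C an n×m real matrix with A·C = 0, M·C = Bᵀ, L := B·C invertible, A + Bᵀ·L⁻¹·B invertible, and A − k²·M invertible for a real number k. Assume the column space of C equals the kernel of A (as linear maps x ↦ C·x and x ↦ A·x on ℝ^m and ℝ^n), and that ker(A) + ker(B) = ℝ^n. Set V := (A + Bᵀ·L⁻¹·B)⁻¹·(I − Bᵀ·L⁻¹·Cᵀ) and T := (A − k²·M)⁻¹·A·V. Then B·T = 0, and the block matrix [[A − k²·M, Bᵀ],[B, 0]] multiplied by [[T, C·L⁻¹],[L⁻¹·Cᵀ, k²·L⁻¹]] equals the identity. -/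
open Matrix

theorem stmt3 {n m : ℕ} (hn : 0 < n) (hm : 0 < m) (k : ℝ)
    (A M : Matrix (Fin n) (Fin n) ℝ) (B : Matrix (Fin m) (Fin n) ℝ)
    (C : Matrix (Fin n) (Fin m) ℝ)
    (hA : Aᵀ = A) (hM : Mᵀ = M)
    (hAC : A * C = 0) (hMC : M * C = Bᵀ)
    (hL : IsUnit (B * C))
    (hInv : IsUnit (A + Bᵀ * (B * C)⁻¹ * B))
    (hK : IsUnit (A - k ^ 2 • M))
    (hrange : LinearMap.range C.mulVecLin = LinearMap.ker A.mulVecLin)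
    (hker : LinearMap.ker A.mulVecLin ⊔ LinearMap.ker B.mulVecLin = ⊤)
    (V T : Matrix (Fin n) (Fin n) ℝ)
    (hV : V = (A + Bᵀ * (B * C)⁻¹ * B)⁻¹ * (1 - Bᵀ * (B * C)⁻¹ * Cᵀ))
    (hT : T = (A - k ^ 2 • M)⁻¹ * A * V) :
    B * T = 0 ∧
      (Matrix.fromBlocks (A - k ^ 2 • M) Bᵀ B 0) *
        (Matrix.fromBlocks T (C * (B * C)⁻¹) ((B * C)⁻¹ * Cᵀ)
          (k ^ 2 • (B * C)⁻¹)) = 1 := by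
  have hLd : IsUnit (B * C).det := (Matrix.isUnit_iff_isUnit_det _).mp hL
  have hSd : IsUnit (A + Bᵀ * (B * C)⁻¹ * B).det := (Matrix.isUnit_iff_isUnit_det _).mp hInv
  have hKd : IsUnit (A - k ^ 2 • M).det := (Matrix.isUnit_iff_isUnit_det _).mp hK
  have hLL : (B * C) * (B * C)⁻¹ = 1 := Matrix.mul_nonsing_inv _ hLd
  have hLL' : (B * C)⁻¹ * (B * C) = 1 := Matrix.nonsing_inv_mul _ hLd
  have hCA : Cᵀ * A = 0 := by
    have h := congrArg Matrix.transpose hAC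
    simpa [Matrix.transpose_mul, hA] using h
  have hBform : B = Cᵀ * M := by
    have h := congrArg Matrix.transpose hMC
    simpa [Matrix.transpose_mul, hM] using h.symm
  have hCB : Cᵀ * Bᵀ = B * C := by
    calc Cᵀ * Bᵀ = (B * C)ᵀ := by rw [Matrix.transpose_mul]
    _ = (Cᵀ * M * C)ᵀ := by rw [← hBform]
    _ = Cᵀ * Mᵀ * C := by
        simp [Matrix.transpose_mul, Matrix.mul_assoc]
    _ = B * C := by rw [hM, ← hBform]
  set P : Matrix (Fin n) (Fin n) ℝ := Bᵀ * (B * C)⁻¹ * Cᵀ with hP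
  set S : Matrix (Fin n) (Fin n) ℝ := A + Bᵀ * (B * C)⁻¹ * B with hS
  have hPS : P * S = Bᵀ * (B * C)⁻¹ * B := by
    rw [hP, hS, mul_add]
    have h1 : Bᵀ * (B * C)⁻¹ * Cᵀ * A = 0 := by
      rw [Matrix.mul_assoc, hCA, Matrix.mul_zero]
    have h2 : Bᵀ * (B * C)⁻¹ * Cᵀ * (Bᵀ * (B * C)⁻¹ * B)
        = Bᵀ * (B * C)⁻¹ * B := by
      calc Bᵀ * (B * C)⁻¹ * Cᵀ * (Bᵀ * (B * C)⁻¹ * B)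
          = Bᵀ * (B * C)⁻¹ * (Cᵀ * Bᵀ) * ((B * C)⁻¹ * B) := by
            simp only [Matrix.mul_assoc]
        _ = Bᵀ * ((B * C)⁻¹ * (B * C)) * ((B * C)⁻¹ * B) := by
            rw [hCB]; simp only [Matrix.mul_assoc]
        _ = Bᵀ * (B * C)⁻¹ * B := by rw [hLL']; simp [Matrix.mul_assoc]
    rw [h1, h2, zero_add]
  have hfact : (1 - P) * S = A := by
    rw [sub_mul, one_mul, hPS, hS]
    abel
  have hAS : A * S⁻¹ = 1 - P := by
    rw [← hfact, Matrix.mul_assoc, Matrix.mul_nonsing_inv _ hSd, Matrix.mul_one]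
  have hPP : P * P = P := by
    calc P * P = Bᵀ * (B * C)⁻¹ * (Cᵀ * Bᵀ) * ((B * C)⁻¹ * Cᵀ) := by
          rw [hP]; simp only [Matrix.mul_assoc]
      _ = Bᵀ * ((B * C)⁻¹ * (B * C)) * ((B * C)⁻¹ * Cᵀ) := by
          rw [hCB]; simp only [Matrix.mul_assoc]
      _ = P := by rw [hLL', hP]; simp [Matrix.mul_assoc]
  have hAV : A * V = 1 - P := by
    rw [hV, ← Matrix.mul_assoc, hAS]
    rw [Matrix.sub_mul, Matrix.one_mul, Matrix.mul_sub, Matrix.mul_one, hPP]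
    abel
  have hKT : (A - k ^ 2 • M) * T = 1 - P := by
    rw [hT, ← Matrix.mul_assoc, ← Matrix.mul_assoc,
      Matrix.mul_nonsing_inv _ hKd, Matrix.one_mul, hAV]
  have hCPe : Cᵀ * P = Cᵀ := by
    rw [hP]
    simp only [← Matrix.mul_assoc]
    rw [hCB, hLL, Matrix.one_mul]
  have hCP : Cᵀ * (1 - P) = 0 := by
    rw [Matrix.mul_sub, Matrix.mul_one, hCPe, sub_self]
  have hBT : B * T = 0 := by
    rcases eq_or_ne k 0 with hk | hk
    · -- k = 0 : contradiction
      exfalso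
      rw [hk] at hKd
      simp only [ne_eq, OfNat.ofNat_ne_zero, not_false_eq_true, zero_pow,
        zero_smul, sub_zero] at hKd
      have hC0 : C = 0 := by
        have h := congrArg (fun X => A⁻¹ * X) hAC
        simpa [← Matrix.mul_assoc, Matrix.nonsing_inv_mul _ hKd] using h
      haveI : Nonempty (Fin m) := ⟨⟨0, hm⟩⟩
      rw [hC0, Matrix.mul_zero] at hLd
      simp at hLd
    · have hk2 : k ^ 2 ≠ 0 := pow_ne_zero _ hk
      have h0 : Cᵀ * ((A - k ^ 2 • M) * T) = 0 := by rw [hKT, hCP]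
      have h1 : Cᵀ * ((A - k ^ 2 • M) * T) = - (k ^ 2 • (B * T)) := by
        rw [sub_mul, Matrix.mul_sub, ← Matrix.mul_assoc, hCA, Matrix.zero_mul,
          zero_sub, Matrix.smul_mul, Matrix.mul_smul, ← Matrix.mul_assoc,
          ← hBform]
      rw [h1, neg_eq_zero, smul_eq_zero] at h0
      exact h0.resolve_left hk2
  refine ⟨hBT, ?_⟩
  have hTR2 : (A - k ^ 2 • M) * (C * (B * C)⁻¹) + Bᵀ * (k ^ 2 • (B * C)⁻¹) = 0 := by
    have e1 : A * (C * (B * C)⁻¹) = 0 := by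
      rw [← Matrix.mul_assoc, hAC, Matrix.zero_mul]
    have e2 : (k ^ 2 • M) * (C * (B * C)⁻¹) = k ^ 2 • (Bᵀ * (B * C)⁻¹) := by
      rw [Matrix.smul_mul, ← Matrix.mul_assoc, hMC]
    rw [Matrix.sub_mul, e1, e2, Matrix.mul_smul]
    abel
  have hBR2 : B * (C * (B * C)⁻¹) = 1 := by rw [← Matrix.mul_assoc, hLL]
  have hPalt : Bᵀ * ((B * C)⁻¹ * Cᵀ) = P := by rw [hP, Matrix.mul_assoc]
  rw [Matrix.fromBlocks_multiply, hKT, hBT, hTR2, hPalt, hBR2]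
  simp only [Matrix.zero_mul, add_zero, zero_add, sub_add_cancel]
  exact Matrix.fromBlocks_one
end

section
/- Let A be an n×n symmetric real matrix, M an n×n symmetric real matrix, B an m×n real matrix and C an n×m real matrix with A·C = 0, M·C = Bᵀ, L := B·C invertible, and A − k²·M invertible for a real number k. Assume the kernel of A is contained in the column space of C and that ker(A) + ker(B) = ℝ^n. Then for every real number η with η ≠ k², the matrix A + η·Bᵀ·L⁻¹·B − k²·M is invertible. -/
open Matrix

theorem stmt4 {n m : ℕ} (hn : 0 < n) (hm : 0 < m) (k : ℝ)
    (A M : Matrix (Fin n) (Fin n) ℝ) (B : Matrix (Fin m) (Fin n) ℝ)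
    (C : Matrix (Fin n) (Fin m) ℝ)
    (hA : Aᵀ = A) (hM : Mᵀ = M)
    (hAC : A * C = 0) (hMC : M * C = Bᵀ)
    (hL : IsUnit (B * C))
    (hK : IsUnit (A - k ^ 2 • M))
    (hker : LinearMap.ker A.mulVecLin ≤ LinearMap.range C.mulVecLin)
    (hsum : LinearMap.ker A.mulVecLin ⊔ LinearMap.ker B.mulVecLin = ⊤) :
    ∀ η : ℝ, η ≠ k ^ 2 →
      IsUnit (A + η • (Bᵀ * (B * C)⁻¹ * B) - k ^ 2 • M) := by
  intro η hη
  set L : Matrix (Fin m) (Fin m) ℝ := B * C with hLdef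
  have hLinv : L⁻¹ * L = 1 := Matrix.nonsing_inv_mul L (Matrix.isUnit_iff_isUnit_det L |>.mp hL)
  have hCM : Cᵀ * M = B := by
    have := congrArg transpose hMC
    simpa [transpose_mul, hM] using this
  -- L is symmetric
  have hLsym : Lᵀ = L := by
    rw [hLdef, ← hCM]
    simp [transpose_mul, hM, Matrix.mul_assoc]
  rw [← Matrix.mulVec_injective_iff_isUnit]
  have hinj : ∀ z, (A + η • (Bᵀ * L⁻¹ * B) - k ^ 2 • M) *ᵥ z = 0 → z = 0 := by
    intro x hx
    -- decompose x = u + v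
    have hxtop : x ∈ LinearMap.ker A.mulVecLin ⊔ LinearMap.ker B.mulVecLin := by
      rw [hsum]; trivial
    obtain ⟨u, hu, v, hv, huv⟩ := Submodule.mem_sup.mp hxtop
    obtain ⟨w, hw⟩ := hker hu
    have hu' : A *ᵥ u = 0 := hu
    have hv' : B *ᵥ v = 0 := hv
    have hw' : C *ᵥ w = u := hw
    -- B *ᵥ x = L *ᵥ w
    have hBx : B *ᵥ x = L *ᵥ w := by
      rw [← huv, Matrix.mulVec_add, hv', add_zero, ← hw', ← Matrix.mulVec_mulVec]
    -- (Bᵀ * L⁻¹ * B) *ᵥ x = Bᵀ *ᵥ w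
    have hPx : (Bᵀ * L⁻¹ * B) *ᵥ x = Bᵀ *ᵥ w := by
      rw [← Matrix.mulVec_mulVec, hBx, Matrix.mulVec_mulVec, Matrix.mul_assoc,
        hLinv, Matrix.mul_one]
    -- A *ᵥ x = A *ᵥ v
    have hAx : A *ᵥ x = A *ᵥ v := by
      rw [← huv, Matrix.mulVec_add, hu', zero_add]
    -- main equation
    have heq : A *ᵥ v + η • (Bᵀ *ᵥ w) - k ^ 2 • (M *ᵥ x) = 0 := by
      rw [← hPx, ← hAx]
      simpa [Matrix.add_mulVec, Matrix.sub_mulVec, Matrix.smul_mulVec] using hx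
    -- apply Cᵀ
    have hCeq : Cᵀ *ᵥ (A *ᵥ v + η • (Bᵀ *ᵥ w) - k ^ 2 • (M *ᵥ x)) = 0 := by
      rw [heq, Matrix.mulVec_zero]
    have hCA : Cᵀ * A = 0 := by
      have := congrArg transpose hAC
      simpa [transpose_mul, hA] using this
    have hCB : Cᵀ * Bᵀ = Lᵀ := by simp [hLdef, transpose_mul]
    rw [Matrix.mulVec_sub, Matrix.mulVec_add, Matrix.mulVec_smul, Matrix.mulVec_smul,
      Matrix.mulVec_mulVec, Matrix.mulVec_mulVec, Matrix.mulVec_mulVec,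
      hCA, hCM, hCB, hLsym, hBx, Matrix.zero_mulVec, zero_add] at hCeq
    have hLw : L *ᵥ w = 0 := by
      have h : (η - k ^ 2) • (L *ᵥ w) = 0 := by
        rw [sub_smul]; rw [sub_eq_zero] at hCeq ⊢; exact hCeq
      have hne : η - k ^ 2 ≠ 0 := sub_ne_zero.mpr hη
      exact (smul_eq_zero.mp h).resolve_left hne
    have hw0 : w = 0 := by
      have := congrArg (fun z => L⁻¹ *ᵥ z) hLw
      simpa [Matrix.mulVec_mulVec, hLinv] using this
    have hu0 : u = 0 := by rw [← hw', hw0, Matrix.mulVec_zero]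
    have hxv : x = v := by rw [← huv, hu0, zero_add]
    -- now (A - k² M) v = 0
    have hfin : (A - k ^ 2 • M) *ᵥ v = 0 := by
      have hBw : Bᵀ *ᵥ w = 0 := by rw [hw0, Matrix.mulVec_zero]
      rw [Matrix.sub_mulVec, Matrix.smul_mulVec, ← hxv]
      rw [hBw, smul_zero, add_zero] at heq
      rw [hAx]
      exact heq
    have hKinv := Matrix.mulVec_injective_iff_isUnit.mpr hK
    rw [hxv]
    have := hKinv (a₁ := v) (a₂ := 0) (by rw [hfin, Matrix.mulVec_zero])
    exact this
  intro x y hxy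
  have := hinj (x - y) (by rw [Matrix.mulVec_sub, hxy, sub_self])
  exact sub_eq_zero.mp this
end

section
/- Let A be an n×n symmetric real matrix, M an n×n symmetric real matrix, B an m×n real matrix and C an n×m real matrix with A·C = 0, M·C = Bᵀ, L := B·C invertible, and A − k²·M invertible for a real number k. Assume the column space of C equals the kernel of A and that ker(A) + ker(B) = ℝ^n. Then the kernel of the matrix A + k²·Bᵀ·L⁻¹·B − k²·M equals the kernel of A (as kernels of the induced linear maps on ℝ^n). -/
open Matrix

theorem stmt5 {n m : ℕ} (hn : 0 < n) (hm : 0 < m) (k : ℝ)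
    (A M : Matrix (Fin n) (Fin n) ℝ) (B : Matrix (Fin m) (Fin n) ℝ)
    (C : Matrix (Fin n) (Fin m) ℝ)
    (hA : Aᵀ = A) (hM : Mᵀ = M)
    (hAC : A * C = 0) (hMC : M * C = Bᵀ)
    (hL : IsUnit (B * C))
    (hK : IsUnit (A - k ^ 2 • M))
    (hrange : LinearMap.range C.mulVecLin = LinearMap.ker A.mulVecLin)
    (hsum : LinearMap.ker A.mulVecLin ⊔ LinearMap.ker B.mulVecLin = ⊤) :
    LinearMap.ker (A + k ^ 2 • (Bᵀ * (B * C)⁻¹ * B) - k ^ 2 • M).mulVecLin =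
      LinearMap.ker A.mulVecLin := by
  set N := A + k ^ 2 • (Bᵀ * (B * C)⁻¹ * B) - k ^ 2 • M with hN
  have hinv : (B * C)⁻¹ * (B * C) = 1 :=
    Matrix.nonsing_inv_mul _ ((Matrix.isUnit_iff_isUnit_det _).mp hL)
  have hNC : N * C = 0 := by
    rw [hN, Matrix.sub_mul, Matrix.add_mul, hAC, Matrix.smul_mul, Matrix.smul_mul, hMC,
      Matrix.mul_assoc, Matrix.mul_assoc, hinv, Matrix.mul_one]
    simp
  have hKinv : (A - k ^ 2 • M)⁻¹ * (A - k ^ 2 • M) = 1 :=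
    Matrix.nonsing_inv_mul _ ((Matrix.isUnit_iff_isUnit_det _).mp hK)
  ext x
  simp only [LinearMap.mem_ker, Matrix.mulVecLin_apply]
  constructor
  · intro hx
    have hxtop : x ∈ LinearMap.ker A.mulVecLin ⊔ LinearMap.ker B.mulVecLin := by
      rw [hsum]; trivial
    obtain ⟨u, hu, v, hv, rfl⟩ := Submodule.mem_sup.mp hxtop
    rw [← hrange] at hu
    obtain ⟨y, rfl⟩ := hu
    simp only [LinearMap.mem_ker, Matrix.mulVecLin_apply] at hv hx ⊢
    have hNu : N.mulVec (C.mulVec y) = 0 := by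
      rw [Matrix.mulVec_mulVec, hNC, Matrix.zero_mulVec]
    have hNv : N.mulVec v = (A - k ^ 2 • M).mulVec v := by
      rw [hN, Matrix.sub_mulVec, Matrix.add_mulVec, Matrix.smul_mulVec,
        Matrix.mul_assoc, ← Matrix.mulVec_mulVec, ← Matrix.mulVec_mulVec, hv]
      simp [Matrix.sub_mulVec]
    have hveq : (A - k ^ 2 • M).mulVec v = 0 := by
      rw [Matrix.mulVec_add, hNu, hNv, zero_add] at hx
      exact hx
    have hv0 : v = 0 := by
      have : ((A - k ^ 2 • M)⁻¹ * (A - k ^ 2 • M)).mulVec v = 0 := by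
        rw [← Matrix.mulVec_mulVec, hveq, Matrix.mulVec_zero]
      rwa [hKinv, Matrix.one_mulVec] at this
    rw [hv0, add_zero, Matrix.mulVec_mulVec, hAC, Matrix.zero_mulVec]
  · intro hx
    have hxr : x ∈ LinearMap.range C.mulVecLin := by
      rw [hrange]; exact hx
    obtain ⟨y, rfl⟩ := hxr
    simp only [Matrix.mulVecLin_apply]
    rw [Matrix.mulVec_mulVec, hNC, Matrix.zero_mulVec]
end

section
/- Let A be an n×n real matrix, M an n×n real matrix, B an m×n real matrix and C an n×m real matrix with A·C = 0, M·C = Bᵀ, and L := B·C invertible. Let k, η be real numbers with η ≠ k² and suppose A + η·Bᵀ·L⁻¹·B − k²·M is invertible. Then (A + η·Bᵀ·L⁻¹·B − k²·M)⁻¹·(I − Bᵀ·L⁻¹·Cᵀ) = (A + η·Bᵀ·L⁻¹·B − k²·M)⁻¹ − (1/(η − k²))·C·L⁻¹·Cᵀ. -/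
open Matrix

theorem stmt6 {n m : ℕ} (hn : 0 < n) (hm : 0 < m) (k η : ℝ)
    (A M : Matrix (Fin n) (Fin n) ℝ) (B : Matrix (Fin m) (Fin n) ℝ)
    (C : Matrix (Fin n) (Fin m) ℝ)
    (hAC : A * C = 0) (hMC : M * C = Bᵀ)
    (hL : IsUnit (B * C))
    (hη : η ≠ k ^ 2)
    (hInv : IsUnit (A + η • (Bᵀ * (B * C)⁻¹ * B) - k ^ 2 • M)) :
    (A + η • (Bᵀ * (B * C)⁻¹ * B) - k ^ 2 • M)⁻¹ * (1 - Bᵀ * (B * C)⁻¹ * Cᵀ) =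
      (A + η • (Bᵀ * (B * C)⁻¹ * B) - k ^ 2 • M)⁻¹ -
        (1 / (η - k ^ 2)) • (C * (B * C)⁻¹ * Cᵀ) := by
  have hLd := (Matrix.isUnit_iff_isUnit_det _).mp hL
  have hSd := (Matrix.isUnit_iff_isUnit_det _).mp hInv
  set S := A + η • (Bᵀ * (B * C)⁻¹ * B) - k ^ 2 • M with hS
  have hSC : S * C = (η - k ^ 2) • Bᵀ := by
    rw [hS, Matrix.sub_mul, Matrix.add_mul, hAC, Matrix.smul_mul, Matrix.smul_mul, hMC,
      Matrix.mul_assoc, Matrix.mul_assoc, Matrix.nonsing_inv_mul _ hLd, Matrix.mul_one, zero_add, sub_smul]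
  have hSBt : S⁻¹ * Bᵀ = (1 / (η - k ^ 2)) • C := by
    have h1 : S⁻¹ * (S * C) = C := by
      rw [← Matrix.mul_assoc, Matrix.nonsing_inv_mul _ hSd, Matrix.one_mul]
    rw [hSC, Matrix.mul_smul] at h1
    have hne : η - k ^ 2 ≠ 0 := sub_ne_zero.mpr hη
    rw [← h1, smul_smul, one_div, inv_mul_cancel₀ hne, one_smul]
  rw [Matrix.mul_sub, Matrix.mul_one, ← Matrix.mul_assoc, ← Matrix.mul_assoc, hSBt,
    Matrix.smul_mul, Matrix.smul_mul, Matrix.mul_assoc]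
end

section
/- Let A be an n×n symmetric real matrix, M an n×n symmetric real matrix, B an m×n real matrix and C an n×m real matrix with A·C = 0, M·C = Bᵀ, L := B·C invertible, and A − k²·M invertible for a real number k. Assume the column space of C equals the kernel of A and that ker(A) + ker(B) = ℝ^n. Then for any two real numbers η₁, η₂ with η₁ ≠ k² and η₂ ≠ k² (so that A + ηᵢ·Bᵀ·L⁻¹·B − k²·M is invertible), (A + η₁·Bᵀ·L⁻¹·B − k²·M)⁻¹·(I − Bᵀ·L⁻¹·Cᵀ) = (A + η₂·Bᵀ·L⁻¹·B − k²·M)⁻¹·(I − Bᵀ·L⁻¹·Cᵀ); that is, this matrix is independent of η. -/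
open Matrix

theorem stmt7 {n m : ℕ} (hn : 0 < n) (hm : 0 < m) (k η₁ η₂ : ℝ)
    (A M : Matrix (Fin n) (Fin n) ℝ) (B : Matrix (Fin m) (Fin n) ℝ)
    (C : Matrix (Fin n) (Fin m) ℝ)
    (hA : Aᵀ = A) (hM : Mᵀ = M)
    (hAC : A * C = 0) (hMC : M * C = Bᵀ)
    (hL : IsUnit (B * C))
    (hK : IsUnit (A - k ^ 2 • M))
    (hrange : LinearMap.range C.mulVecLin = LinearMap.ker A.mulVecLin)
    (hsum : LinearMap.ker A.mulVecLin ⊔ LinearMap.ker B.mulVecLin = ⊤)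
    (hη₁ : η₁ ≠ k ^ 2) (hη₂ : η₂ ≠ k ^ 2) :
    (A + η₁ • (Bᵀ * (B * C)⁻¹ * B) - k ^ 2 • M)⁻¹ * (1 - Bᵀ * (B * C)⁻¹ * Cᵀ) =
      (A + η₂ • (Bᵀ * (B * C)⁻¹ * B) - k ^ 2 • M)⁻¹ *
        (1 - Bᵀ * (B * C)⁻¹ * Cᵀ) := by
  have hLdet : IsUnit (B * C).det := (Matrix.isUnit_iff_isUnit_det _).mp hL
  have hKdet : IsUnit (A - k ^ 2 • M).det := (Matrix.isUnit_iff_isUnit_det _).mp hK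
  set L : Matrix (Fin m) (Fin m) ℝ := B * C with hLdef
  set K : Matrix (Fin n) (Fin n) ℝ := A - k ^ 2 • M with hKdef
  clear_value L K
  have hLL : L * L⁻¹ = 1 := Matrix.mul_nonsing_inv _ hLdet
  have hLL' : L⁻¹ * L = 1 := Matrix.nonsing_inv_mul _ hLdet
  have hKK' : K⁻¹ * K = 1 := Matrix.nonsing_inv_mul _ hKdet
  have hKK : K * K⁻¹ = 1 := Matrix.mul_nonsing_inv _ hKdet
  -- k ^ 2 ≠ 0
  have hk2 : (k ^ 2 : ℝ) ≠ 0 := by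
    intro h
    have hKA : K = A := by rw [hKdef, h]; simp
    have hC0 : C = 0 := by
      have h1 : K⁻¹ * (K * C) = C := by rw [← Matrix.mul_assoc, hKK', Matrix.one_mul]
      rw [hKA, hAC, Matrix.mul_zero] at h1
      exact h1.symm
    have hL0 : L = 0 := by rw [hLdef, hC0, Matrix.mul_zero]
    rw [hL0] at hL
    have h01 : (0 : Matrix (Fin m) (Fin m) ℝ) = 1 := isUnit_zero_iff.mp hL
    have := congrFun (congrFun h01 ⟨0, hm⟩) ⟨0, hm⟩
    simp [Matrix.one_apply] at this
  -- basic identities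
  have hCtM : Cᵀ * M = B := by
    have := congrArg Matrix.transpose hMC
    simpa [Matrix.transpose_mul, hM] using this
  have hLsym : Lᵀ = L := by
    rw [hLdef, Matrix.transpose_mul, ← hMC, ← Matrix.mul_assoc, hCtM]
  have hKsym : Kᵀ = K := by
    rw [hKdef, Matrix.transpose_sub, Matrix.transpose_smul, hA, hM]
  have hCtBt : Cᵀ * Bᵀ = L := by rw [← Matrix.transpose_mul, ← hLdef, hLsym]
  have hKC : K * C = (-(k ^ 2)) • Bᵀ := by
    rw [hKdef, Matrix.sub_mul, hAC, Matrix.smul_mul, hMC]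
    simp
  have hKiB : K⁻¹ * Bᵀ = (-(k ^ 2)⁻¹) • C := by
    have h1 : K⁻¹ * (K * C) = C := by rw [← Matrix.mul_assoc, hKK', Matrix.one_mul]
    rw [hKC, Matrix.mul_smul] at h1
    have h2 : (-(k ^ 2)⁻¹) • ((-(k ^ 2)) • (K⁻¹ * Bᵀ)) = (-(k ^ 2)⁻¹) • C := by
      rw [h1]
    rw [smul_smul, neg_mul_neg, inv_mul_cancel₀ hk2, one_smul] at h2
    exact h2
  have hBKi : B * K⁻¹ = (-(k ^ 2)⁻¹) • Cᵀ := by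
    have := congrArg Matrix.transpose hKiB
    rw [Matrix.transpose_mul, Matrix.transpose_nonsing_inv, hKsym,
      Matrix.transpose_smul] at this
    exact this
  -- Cᵀ kills the right factor
  have hCtQ : Cᵀ * (1 - Bᵀ * L⁻¹ * Cᵀ) = 0 := by
    rw [Matrix.mul_sub, Matrix.mul_one, ← Matrix.mul_assoc, ← Matrix.mul_assoc,
      hCtBt, hLL, Matrix.one_mul, sub_self]
  -- the key claim: the inverse applied to Q does not depend on η
  have key : ∀ η : ℝ, η ≠ k ^ 2 →
      (A + η • (Bᵀ * L⁻¹ * B) - k ^ 2 • M)⁻¹ * (1 - Bᵀ * L⁻¹ * Cᵀ) =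
        K⁻¹ * (1 - Bᵀ * L⁻¹ * Cᵀ) := by
    intro η hη
    have hη' : η - k ^ 2 ≠ 0 := sub_ne_zero.mpr hη
    set c : ℝ := η / (k ^ 2 * (η - k ^ 2)) with hc
    set P : Matrix (Fin n) (Fin n) ℝ := Bᵀ * L⁻¹ * B with hP
    set R : Matrix (Fin n) (Fin n) ℝ := C * L⁻¹ * Cᵀ with hR
    clear_value c P R
    have hS : A + η • P - k ^ 2 • M = K + η • P := by
      rw [hKdef]; abel
    have h1 : K * R = (-(k ^ 2)) • (Bᵀ * L⁻¹ * Cᵀ) := by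
      rw [hR, ← Matrix.mul_assoc, ← Matrix.mul_assoc, hKC,
        Matrix.smul_mul, Matrix.smul_mul]
    have h2 : P * K⁻¹ = (-(k ^ 2)⁻¹) • (Bᵀ * L⁻¹ * Cᵀ) := by
      rw [hP, Matrix.mul_assoc, hBKi, Matrix.mul_smul]
    have h3 : P * R = Bᵀ * L⁻¹ * Cᵀ := by
      rw [hP, hR]
      simp only [Matrix.mul_assoc]
      rw [← Matrix.mul_assoc B C, ← hLdef, ← Matrix.mul_assoc L⁻¹ L, hLL',
        Matrix.one_mul]
    have hSE : (K + η • P) * (K⁻¹ + c • R) = 1 := by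
      have expand : (K + η • P) * (K⁻¹ + c • R) =
          K * K⁻¹ + c • (K * R) + η • (P * K⁻¹) + (c * η) • (P * R) := by
        simp only [Matrix.add_mul, Matrix.mul_add, Matrix.smul_mul,
          Matrix.mul_smul, smul_smul, smul_add]
        abel
      rw [expand, hKK, h1, h2, h3]
      simp only [smul_smul]
      have hcoef : c * -(k ^ 2) + η * -(k ^ 2)⁻¹ + c * η = 0 := by
        rw [hc]; field_simp; ring
      calc 1 + (c * -(k ^ 2)) • (Bᵀ * L⁻¹ * Cᵀ) + (η * -(k ^ 2)⁻¹) • (Bᵀ * L⁻¹ * Cᵀ)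
            + (c * η) • (Bᵀ * L⁻¹ * Cᵀ)
          = 1 + (c * -(k ^ 2) + η * -(k ^ 2)⁻¹ + c * η) • (Bᵀ * L⁻¹ * Cᵀ) := by
            rw [add_smul, add_smul]; abel
        _ = 1 := by rw [hcoef, zero_smul, add_zero]
    have hSinv : (A + η • P - k ^ 2 • M)⁻¹ = K⁻¹ + c • R := by
      rw [hS]; exact Matrix.inv_eq_right_inv hSE
    rw [hSinv, Matrix.add_mul, Matrix.smul_mul, hR]
    have hz : C * L⁻¹ * Cᵀ * (1 - Bᵀ * L⁻¹ * Cᵀ) = 0 := by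
      rw [Matrix.mul_assoc (C * L⁻¹) Cᵀ _, hCtQ, Matrix.mul_zero]
    rw [hz, smul_zero, add_zero]
  rw [key η₁ hη₁, key η₂ hη₂]
end

section
/- Let A be an n×n symmetric real matrix, M an n×n symmetric real matrix, B an m×n real matrix and C an n×m real matrix with A·C = 0, M·C = Bᵀ, L := B·C invertible, and A − k²·M invertible for a real number k. Assume the column space of C equals the kernel of A and that ker(A) + ker(B) = ℝ^n. Then for every real η ≠ k² (so that A + η·Bᵀ·L⁻¹·B − k²·M is invertible), the block matrix [[A − k²·M, Bᵀ],[B, 0]] multiplied by [[(A + η·Bᵀ·L⁻¹·B − k²·M)⁻¹·(I − Bᵀ·L⁻¹·Cᵀ), C·L⁻¹],[L⁻¹·Cᵀ, k²·L⁻¹]] equals the identity matrix. -/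
open Matrix

theorem stmt8 {n m : ℕ} (hn : 0 < n) (hm : 0 < m) (k : ℝ)
    (A M : Matrix (Fin n) (Fin n) ℝ) (B : Matrix (Fin m) (Fin n) ℝ)
    (C : Matrix (Fin n) (Fin m) ℝ)
    (hA : Aᵀ = A) (hM : Mᵀ = M)
    (hAC : A * C = 0) (hMC : M * C = Bᵀ)
    (hL : IsUnit (B * C))
    (hK : IsUnit (A - k ^ 2 • M))
    (hrange : LinearMap.range C.mulVecLin = LinearMap.ker A.mulVecLin)
    (hsum : LinearMap.ker A.mulVecLin ⊔ LinearMap.ker B.mulVecLin = ⊤) :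
    ∀ η : ℝ, η ≠ k ^ 2 →
      (Matrix.fromBlocks (A - k ^ 2 • M) Bᵀ B 0) *
        (Matrix.fromBlocks
          ((A + η • (Bᵀ * (B * C)⁻¹ * B) - k ^ 2 • M)⁻¹ *
            (1 - Bᵀ * (B * C)⁻¹ * Cᵀ))
          (C * (B * C)⁻¹) ((B * C)⁻¹ * Cᵀ) (k ^ 2 • (B * C)⁻¹)) = 1 := by
  intro η hη
  -- k ≠ 0
  have hk : k ≠ 0 := by
    rintro rfl
    norm_num at hK
    have hA1 : A⁻¹ * A = 1 := Matrix.nonsing_inv_mul A ((Matrix.isUnit_iff_isUnit_det A).mp hK)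
    have hC0 : C = 0 := by
      calc C = (A⁻¹ * A) * C := by rw [hA1, Matrix.one_mul]
      _ = A⁻¹ * (A * C) := by rw [Matrix.mul_assoc]
      _ = 0 := by rw [hAC, Matrix.mul_zero]
    rw [hC0, Matrix.mul_zero] at hL
    have := (Matrix.isUnit_iff_isUnit_det (0 : Matrix (Fin m) (Fin m) ℝ)).mp hL
    haveI hne : Nonempty (Fin m) := ⟨⟨0, hm⟩⟩
    rw [Matrix.det_zero] at this
    exact this.ne_zero rfl
  have ht : (k^2 : ℝ) ≠ 0 := pow_ne_zero _ hk
  set K : Matrix (Fin n) (Fin n) ℝ := A - k ^ 2 • M with hKdef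
  set L : Matrix (Fin m) (Fin m) ℝ := B * C with hLdef
  -- basic relations
  have hKC : K * C = (-(k^2)) • Bᵀ := by
    rw [hKdef, Matrix.sub_mul, hAC, Matrix.smul_mul, hMC, zero_sub, neg_smul]
  have hKT : Kᵀ = K := by
    rw [hKdef, Matrix.transpose_sub, Matrix.transpose_smul, hA, hM]
  have hCK : Cᵀ * K = (-(k^2)) • B := by
    have := congrArg Matrix.transpose hKC
    rw [Matrix.transpose_mul, hKT, Matrix.transpose_smul, Matrix.transpose_transpose] at this
    exact this
  have hBT : Bᵀ = (-(k^2)⁻¹) • (K * C) := by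
    rw [hKC, smul_smul]
    rw [show (-(k^2)⁻¹) * (-(k^2)) = (k^2)⁻¹ * (k^2) by ring, inv_mul_cancel₀ ht, one_smul]
  have hB : B = (-(k^2)⁻¹) • (Cᵀ * K) := by
    rw [hCK, smul_smul]
    rw [show (-(k^2)⁻¹) * (-(k^2)) = (k^2)⁻¹ * (k^2) by ring, inv_mul_cancel₀ ht, one_smul]
  -- unit facts
  have hL1 : L * L⁻¹ = 1 := Matrix.mul_nonsing_inv L ((Matrix.isUnit_iff_isUnit_det L).mp hL)
  have hL2 : L⁻¹ * L = 1 := Matrix.nonsing_inv_mul L ((Matrix.isUnit_iff_isUnit_det L).mp hL)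
  have hK1 : K * K⁻¹ = 1 := Matrix.mul_nonsing_inv K ((Matrix.isUnit_iff_isUnit_det K).mp hK)
  have hK2 : K⁻¹ * K = 1 := Matrix.nonsing_inv_mul K ((Matrix.isUnit_iff_isUnit_det K).mp hK)
  -- word rewriting rules (right-assoc, with trailing factor)
  have Q1' : Cᵀ * (K * C) = (-(k^2)) • L := by
    rw [← Matrix.mul_assoc, hCK, Matrix.smul_mul, hLdef]
  have Q1 : ∀ (p : Type) [Fintype p] (X : Matrix (Fin m) p ℝ),
      Cᵀ * (K * (C * X)) = (-(k^2)) • (L * X) := by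
    intro p _ X
    rw [← Matrix.mul_assoc, ← Matrix.mul_assoc, Matrix.mul_assoc Cᵀ K C, Q1', Matrix.smul_mul]
  have Q2 : ∀ (p : Type) [Fintype p] (X : Matrix (Fin m) p ℝ),
      L⁻¹ * (L * X) = X := by
    intro p _ X; rw [← Matrix.mul_assoc, hL2, Matrix.one_mul]
  have Q3 : ∀ (p : Type) [Fintype p] (X : Matrix (Fin m) p ℝ),
      L * (L⁻¹ * X) = X := by
    intro p _ X; rw [← Matrix.mul_assoc, hL1, Matrix.one_mul]
  have Q4 : ∀ (p : Type) [Fintype p] (X : Matrix (Fin n) p ℝ),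
      K * (K⁻¹ * X) = X := by
    intro p _ X; rw [← Matrix.mul_assoc, hK1, Matrix.one_mul]
  have Q5 : ∀ (p : Type) [Fintype p] (X : Matrix (Fin n) p ℝ),
      K⁻¹ * (K * X) = X := by
    intro p _ X; rw [← Matrix.mul_assoc, hK2, Matrix.one_mul]
  -- the inverse of P
  set d : ℝ := η / (k^2 * (η - k^2)) with hddef
  have hPR : (A + η • (Bᵀ * L⁻¹ * B) - k ^ 2 • M) * (K⁻¹ + d • (C * (L⁻¹ * Cᵀ))) = 1 := by
    have hP : A + η • (Bᵀ * L⁻¹ * B) - k ^ 2 • M = K + η • (Bᵀ * L⁻¹ * B) := by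
      rw [hKdef]; abel
    rw [hP, hBT, hB]
    simp only [Matrix.smul_mul, Matrix.mul_smul, smul_smul, Matrix.mul_assoc,
      Matrix.add_mul, Matrix.mul_add, Q1, Q2, Q3, Q4, Q5, Q1', hK1, hL1, hL2, hK2,
      Matrix.mul_one, Matrix.one_mul]
    have hs : η - k^2 ≠ 0 := sub_ne_zero.mpr hη
    rw [hddef]
    match_scalars <;> field_simp <;> ring
  have hPinv : (A + η • (Bᵀ * L⁻¹ * B) - k ^ 2 • M)⁻¹ = K⁻¹ + d • (C * (L⁻¹ * Cᵀ)) :=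
    Matrix.inv_eq_right_inv hPR
  rw [Matrix.fromBlocks_multiply, hPinv, ← Matrix.fromBlocks_one]
  rw [Matrix.fromBlocks_inj]
  refine ⟨?_, ?_, ?_, ?_⟩
  · -- top-left
    rw [hBT]
    simp only [Matrix.smul_mul, Matrix.mul_smul, smul_smul, Matrix.mul_assoc,
      Matrix.add_mul, Matrix.mul_add, Matrix.mul_sub, Matrix.sub_mul, Q1, Q2, Q3, Q4, Q5, Q1',
      hK1, hL1, hL2, hK2, Matrix.mul_one, Matrix.one_mul, Matrix.mul_zero, Matrix.zero_mul]
    match_scalars <;> field_simp <;> ring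
  · -- top-right
    rw [hBT]
    simp only [Matrix.smul_mul, Matrix.mul_smul, smul_smul, Matrix.mul_assoc,
      Matrix.add_mul, Matrix.mul_add, Matrix.mul_sub, Matrix.sub_mul, Q1, Q2, Q3, Q4, Q5, Q1',
      hK1, hL1, hL2, hK2, Matrix.mul_one, Matrix.one_mul, Matrix.mul_zero, Matrix.zero_mul]
    match_scalars <;> field_simp <;> ring
  · -- bottom-left
    rw [hBT, hB]
    simp only [Matrix.smul_mul, Matrix.mul_smul, smul_smul, Matrix.mul_assoc,
      Matrix.add_mul, Matrix.mul_add, Matrix.mul_sub, Matrix.sub_mul, Q1, Q2, Q3, Q4, Q5, Q1',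
      hK1, hL1, hL2, hK2, Matrix.mul_one, Matrix.one_mul, Matrix.mul_zero, Matrix.zero_mul]
    match_scalars <;> field_simp <;> ring
  · -- bottom-right
    simp only [Matrix.zero_mul, add_zero, ← hLdef, ← Matrix.mul_assoc]
    exact hL1
end

section
/- Let A be an n×n real matrix, B an m×n real matrix and C an n×m real matrix with A·C = 0 and L := B·C invertible. Let f ∈ ℝ^n and g ∈ ℝ^m, and suppose u₀ ∈ ℝ^n satisfies A·u₀ = f − Bᵀ·L⁻¹·Cᵀ·f. Define u := (I − C·L⁻¹·B)·u₀ + C·L⁻¹·g and p := L⁻¹·Cᵀ·f. Then A·u + Bᵀ·p = f and B·u = g; that is, (u, p) solves the saddle-point system [[A, Bᵀ],[B, 0]]·(u, p) = (f, g). -/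
open Matrix

theorem stmt9 {n m : ℕ} (hn : 0 < n) (hm : 0 < m)
    (A : Matrix (Fin n) (Fin n) ℝ) (B : Matrix (Fin m) (Fin n) ℝ)
    (C : Matrix (Fin n) (Fin m) ℝ)
    (hAC : A * C = 0)
    (hL : IsUnit (B * C))
    (f : Fin n → ℝ) (g : Fin m → ℝ) (u₀ : Fin n → ℝ)
    (hu₀ : A *ᵥ u₀ = f - (Bᵀ * (B * C)⁻¹ * Cᵀ) *ᵥ f)
    (u : Fin n → ℝ) (p : Fin m → ℝ)
    (hu : u = (1 - C * (B * C)⁻¹ * B) *ᵥ u₀ + (C * (B * C)⁻¹) *ᵥ g)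
    (hp : p = ((B * C)⁻¹ * Cᵀ) *ᵥ f) :
    A *ᵥ u + Bᵀ *ᵥ p = f ∧ B *ᵥ u = g := by
  have hdet : IsUnit (B * C).det := (Matrix.isUnit_iff_isUnit_det _).mp hL
  have hinv : (B * C) * (B * C)⁻¹ = 1 := Matrix.mul_nonsing_inv _ hdet
  subst hu hp
  constructor
  · have h1 : A * (1 - C * (B * C)⁻¹ * B) = A := by
      rw [Matrix.mul_sub, Matrix.mul_one,
        show A * (C * (B * C)⁻¹ * B) = (A * C) * ((B * C)⁻¹ * B) by
          simp only [Matrix.mul_assoc],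
        hAC, Matrix.zero_mul, sub_zero]
    have h2 : A * (C * (B * C)⁻¹) = 0 := by
      rw [← Matrix.mul_assoc, hAC, Matrix.zero_mul]
    rw [Matrix.mulVec_add]
    simp only [Matrix.mulVec_mulVec]
    rw [h1, h2, hu₀, Matrix.zero_mulVec, add_zero, Matrix.mul_assoc,
      sub_add_cancel]
  · have h1 : B * (1 - C * (B * C)⁻¹ * B) = 0 := by
      rw [Matrix.mul_sub, Matrix.mul_one,
        show B * (C * (B * C)⁻¹ * B) = ((B * C) * (B * C)⁻¹) * B by
          simp only [Matrix.mul_assoc],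
        hinv, Matrix.one_mul, sub_self]
    have h2 : B * (C * (B * C)⁻¹) = 1 := by rw [← Matrix.mul_assoc, hinv]
    rw [Matrix.mulVec_add]
    simp only [Matrix.mulVec_mulVec]
    rw [h1, h2, Matrix.zero_mulVec, Matrix.one_mulVec, zero_add]
end

section
/- Let A be an n×n symmetric real matrix, M an n×n symmetric real matrix, B an m×n real matrix and C an n×m real matrix with A·C = 0, M·C = Bᵀ, and L := B·C invertible. Let k, η be real numbers and suppose A + (η − k²)·M is invertible. Then the block matrix product [[(A + (η − k²)·M)⁻¹·(I − Bᵀ·L⁻¹·Cᵀ), C·L⁻¹],[L⁻¹·Cᵀ, k²·L⁻¹]] · [[A − k²·M, Bᵀ],[B, 0]] equals the block diagonal matrix [[(A + (η − k²)·M)⁻¹·(A + η·Bᵀ·L⁻¹·B − k²·M), 0],[0, I_m]]. -/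
open Matrix

theorem stmt10 {n m : ℕ} (hn : 0 < n) (hm : 0 < m) (k η : ℝ)
    (A M : Matrix (Fin n) (Fin n) ℝ) (B : Matrix (Fin m) (Fin n) ℝ)
    (C : Matrix (Fin n) (Fin m) ℝ)
    (hA : Aᵀ = A) (hM : Mᵀ = M)
    (hAC : A * C = 0) (hMC : M * C = Bᵀ)
    (hL : IsUnit (B * C))
    (hInv : IsUnit (A + (η - k ^ 2) • M)) :
    (Matrix.fromBlocks
        ((A + (η - k ^ 2) • M)⁻¹ * (1 - Bᵀ * (B * C)⁻¹ * Cᵀ))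
        (C * (B * C)⁻¹) ((B * C)⁻¹ * Cᵀ) (k ^ 2 • (B * C)⁻¹)) *
      (Matrix.fromBlocks (A - k ^ 2 • M) Bᵀ B 0) =
    Matrix.fromBlocks
      ((A + (η - k ^ 2) • M)⁻¹ * (A + η • (Bᵀ * (B * C)⁻¹ * B) - k ^ 2 • M))
      0 0 (1 : Matrix (Fin m) (Fin m) ℝ) := by
  set L := B * C with hLdef
  set X := A + (η - k ^ 2) • M with hXdef
  have hLdet : IsUnit L.det := (Matrix.isUnit_iff_isUnit_det L).mp hL
  have hXdet : IsUnit X.det := (Matrix.isUnit_iff_isUnit_det X).mp hInv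
  have hLinv : L⁻¹ * L = 1 := Matrix.nonsing_inv_mul L hLdet
  have hXinv : X⁻¹ * X = 1 := Matrix.nonsing_inv_mul X hXdet
  have hCA : Cᵀ * A = 0 := by
    have := congrArg Matrix.transpose hAC
    simpa [Matrix.transpose_mul, hA] using this
  have hCM : Cᵀ * M = B := by
    have := congrArg Matrix.transpose hMC
    simpa [Matrix.transpose_mul, hM] using this
  have hCB : Cᵀ * Bᵀ = L := by rw [← hMC, ← Matrix.mul_assoc, hCM]
  rw [Matrix.fromBlocks_multiply]
  have h11 : X⁻¹ * (1 - Bᵀ * L⁻¹ * Cᵀ) * (A - k ^ 2 • M) + C * L⁻¹ * B =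
      X⁻¹ * (A + η • (Bᵀ * L⁻¹ * B) - k ^ 2 • M) := by
    have hXC : X * (C * (L⁻¹ * B)) = (η - k ^ 2) • (Bᵀ * (L⁻¹ * B)) := by
      rw [hXdef, ← Matrix.mul_assoc, Matrix.add_mul, Matrix.smul_mul, hAC, hMC]
      simp [Matrix.smul_mul, Matrix.mul_assoc]
    have key : (1 - Bᵀ * L⁻¹ * Cᵀ) * (A - k ^ 2 • M) + X * (C * (L⁻¹ * B)) =
        A + η • (Bᵀ * (L⁻¹ * B)) - k ^ 2 • M := by
      rw [hXC]
      simp only [Matrix.sub_mul, Matrix.one_mul, Matrix.mul_sub, Matrix.mul_smul,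
        Matrix.mul_assoc, hCA, hCM, Matrix.mul_zero, smul_zero, sub_zero]
      module
    have hC : C * L⁻¹ * B = X⁻¹ * (X * (C * (L⁻¹ * B))) := by
      rw [← Matrix.mul_assoc, hXinv, Matrix.one_mul, Matrix.mul_assoc]
    rw [hC, Matrix.mul_assoc X⁻¹ _ (A - k ^ 2 • M), ← Matrix.mul_add, key,
      ← Matrix.mul_assoc Bᵀ L⁻¹ B]
  have h12 : X⁻¹ * (1 - Bᵀ * L⁻¹ * Cᵀ) * Bᵀ + C * L⁻¹ * (0 : Matrix (Fin m) (Fin m) ℝ) = 0 := by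
    simp only [Matrix.mul_zero, add_zero, Matrix.mul_assoc, Matrix.sub_mul,
      Matrix.one_mul, hCB, hLinv, Matrix.mul_one, sub_self, Matrix.mul_zero]
  have h21 : L⁻¹ * Cᵀ * (A - k ^ 2 • M) + (k ^ 2 • L⁻¹) * B = 0 := by
    rw [Matrix.mul_assoc, Matrix.mul_sub, Matrix.mul_smul, hCA, hCM]
    simp [Matrix.smul_mul, Matrix.mul_smul]
  have h22 : L⁻¹ * Cᵀ * Bᵀ + (k ^ 2 • L⁻¹) * (0 : Matrix (Fin m) (Fin m) ℝ) = 1 := by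
    rw [Matrix.mul_zero, add_zero, Matrix.mul_assoc, hCB, hLinv]
  rw [h11, h12, h21, h22]
end

section
/- Let A be an n×n symmetric positive semidefinite real matrix, M an n×n symmetric positive definite real matrix, B an m×n real matrix and C an n×m real matrix with A·C = 0, M·C = Bᵀ, L := B·C invertible, and A − k²·M invertible for a real number k. Assume the column space of C equals the kernel of A and that ker(A) + ker(B) = ℝ^n. Then for every real η > k², the block matrix [[(A + (η − k²)·M)⁻¹·(I − Bᵀ·L⁻¹·Cᵀ), C·L⁻¹],[L⁻¹·Cᵀ, k²·L⁻¹]] is invertible. -/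
open Matrix

theorem stmt11 {n m : ℕ} (hn : 0 < n) (hm : 0 < m) (k η : ℝ)
    (A M : Matrix (Fin n) (Fin n) ℝ) (B : Matrix (Fin m) (Fin n) ℝ)
    (C : Matrix (Fin n) (Fin m) ℝ)
    (hA : A.PosSemidef) (hM : M.PosDef)
    (hAC : A * C = 0) (hMC : M * C = Bᵀ)
    (hL : IsUnit (B * C))
    (hK : IsUnit (A - k ^ 2 • M))
    (hrange : LinearMap.range C.mulVecLin = LinearMap.ker A.mulVecLin)
    (hsum : LinearMap.ker A.mulVecLin ⊔ LinearMap.ker B.mulVecLin = ⊤)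
    (hη : k ^ 2 < η) :
    IsUnit (Matrix.fromBlocks
      ((A + (η - k ^ 2) • M)⁻¹ * (1 - Bᵀ * (B * C)⁻¹ * Cᵀ))
      (C * (B * C)⁻¹) ((B * C)⁻¹ * Cᵀ) (k ^ 2 • (B * C)⁻¹)) := by
  haveI : Nonempty (Fin m) := ⟨⟨0, hm⟩⟩
  set L := B * C with hLdef
  have hLdet : IsUnit L.det := (Matrix.isUnit_iff_isUnit_det L).mp hL
  have hLinv : L⁻¹ * L = 1 := Matrix.nonsing_inv_mul L hLdet
  have hLinv' : L * L⁻¹ = 1 := Matrix.mul_nonsing_inv L hLdet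
  -- k ≠ 0
  have hk : k ≠ 0 := by
    rintro rfl
    have hKA : IsUnit A := by simpa using hK
    have hC0 : C = 0 := by
      have := congrArg (fun X => A⁻¹ * X) hAC
      simpa [← Matrix.mul_assoc,
        Matrix.nonsing_inv_mul A ((Matrix.isUnit_iff_isUnit_det A).mp hKA)] using this
    rw [hLdef, hC0, Matrix.mul_zero] at hL
    exact zero_ne_one (isUnit_zero_iff.mp hL)
  have hk2 : (k : ℝ) ^ 2 ≠ 0 := pow_ne_zero _ hk
  -- S is positive definite, hence invertible
  set S := A + (η - k ^ 2) • M with hSdef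
  have hMt : Mᵀ = M := by
    rw [← Matrix.conjTranspose_eq_transpose_of_trivial, hM.1.eq]
  have hSM : ((η - k ^ 2) • M).PosDef := by
    refine ⟨?_, fun x hx => ?_⟩
    · simp [Matrix.IsHermitian, Matrix.conjTranspose_smul, hMt]
    · have h := mul_pos (by linarith : (0 : ℝ) < η - k ^ 2) (hM.2 hx)
      simp only [Finsupp.mul_sum] at h
      convert h using 1
      refine Finsupp.sum_congr fun i _ => Finsupp.sum_congr fun j _ => ?_
      simp only [Matrix.smul_apply, smul_eq_mul, star_trivial]
      ring
  have hS : S.PosDef := Matrix.PosDef.posSemidef_add hA hSM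
  have hSdet : IsUnit S.det := hS.det_pos.ne'.isUnit
  have hSinv : S⁻¹ * S = 1 := Matrix.nonsing_inv_mul S hSdet
  have hSinv' : S * S⁻¹ = 1 := Matrix.mul_nonsing_inv S hSdet
  -- B = Cᵀ * M and L is symmetric
  have hB : B = Cᵀ * M := by
    have := congrArg Matrix.transpose hMC
    simpa [Matrix.transpose_mul, hMt] using this.symm
  have hCB : Cᵀ * Bᵀ = L := by
    have : Lᵀ = Cᵀ * Bᵀ := by rw [hLdef, Matrix.transpose_mul]
    have hLsymm : Lᵀ = L := by
      rw [hLdef, Matrix.transpose_mul, ← hMC, hB, Matrix.mul_assoc]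
    rw [← this, hLsymm]
  -- Q is idempotent
  set Q := Bᵀ * L⁻¹ * Cᵀ with hQdef
  have hQ2 : Q * Q = Q := by
    calc Q * Q = Bᵀ * L⁻¹ * (Cᵀ * Bᵀ) * L⁻¹ * Cᵀ := by
          simp only [hQdef, Matrix.mul_assoc]
      _ = Q := by rw [hCB, Matrix.mul_assoc Bᵀ, hLinv, Matrix.mul_one]
  -- S * C = (η - k²) • Bᵀ
  have hSC : S * C = (η - k ^ 2) • Bᵀ := by
    rw [hSdef, Matrix.add_mul, hAC, Matrix.smul_mul, hMC, zero_add]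
  -- invertibility of W := k² • L⁻¹
  letI iW : Invertible (k ^ 2 • L⁻¹) :=
    ⟨(k ^ 2)⁻¹ • L, by
      rw [Matrix.smul_mul, Matrix.mul_smul, hLinv', smul_smul, inv_mul_cancel₀ hk2, one_smul], by
      rw [Matrix.smul_mul, Matrix.mul_smul, hLinv, smul_smul, mul_inv_cancel₀ hk2, one_smul]⟩
  rw [isUnit_fromBlocks_iff_of_invertible₂₂]
  have hinvOf : ⅟(k ^ 2 • L⁻¹) = (k ^ 2)⁻¹ • L := rfl
  -- compute the Schur complement
  have hSchur : S⁻¹ * (1 - Q) - C * L⁻¹ * ⅟(k ^ 2 • L⁻¹) * (L⁻¹ * Cᵀ)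
      = S⁻¹ * (1 - (η / k ^ 2) • Q) := by
    rw [hinvOf]
    have h1 : C * L⁻¹ * ((k ^ 2)⁻¹ • L) * (L⁻¹ * Cᵀ) = (k ^ 2)⁻¹ • (C * (L⁻¹ * Cᵀ)) := by
      simp only [Matrix.mul_smul, Matrix.smul_mul]
      rw [Matrix.mul_assoc C, hLinv, Matrix.mul_one]
    have h2 : C * (L⁻¹ * Cᵀ) = S⁻¹ * ((η - k ^ 2) • Q) := by
      have : S⁻¹ * (S * C) * (L⁻¹ * Cᵀ) = C * (L⁻¹ * Cᵀ) := by
        rw [← Matrix.mul_assoc S⁻¹ S C, hSinv, Matrix.one_mul]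
      rw [← this, hSC]
      simp only [Matrix.mul_smul, Matrix.smul_mul, Matrix.mul_assoc, hQdef]
    rw [h1, h2]
    simp only [Matrix.mul_sub, Matrix.mul_one, Matrix.mul_smul, smul_smul]
    rw [sub_sub]
    congr 1
    rw [show η / k ^ 2 = 1 + (k ^ 2)⁻¹ * (η - k ^ 2) by field_simp; ring, add_smul, one_smul]
  rw [hSchur]
  -- 1 - λ • Q is invertible for λ = η / k² ≠ 1
  set lam := η / k ^ 2 with hlam
  have hlam1 : lam ≠ 1 := by
    rw [hlam]
    intro h
    have : η = k ^ 2 := by field_simp at h; linarith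
    linarith
  have hsub : (1 : ℝ) - lam ≠ 0 := sub_ne_zero.mpr (Ne.symm hlam1)
  set mu := lam / (1 - lam) with hmu
  have hco : lam + lam * mu = mu := by rw [hmu]; field_simp; ring
  have hlm : lam * mu = mu - lam := by linarith [hco]
  have hunit : IsUnit (1 - lam • Q) := by
    refine isUnit_iff_exists.mpr ⟨1 + mu • Q, ?_, ?_⟩
    · simp only [Matrix.mul_add, Matrix.add_mul, Matrix.sub_mul, Matrix.mul_sub,
        Matrix.mul_one, Matrix.one_mul, Matrix.smul_mul, Matrix.mul_smul, hQ2, smul_smul]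
      rw [smul_sub, smul_smul, mul_comm mu lam, hlm, ← sub_smul, sub_sub_cancel]
      abel
    · simp only [Matrix.mul_add, Matrix.add_mul, Matrix.sub_mul, Matrix.mul_sub,
        Matrix.mul_one, Matrix.one_mul, Matrix.smul_mul, Matrix.mul_smul, hQ2, smul_smul]
      rw [smul_add, smul_smul, hlm, ← add_smul, add_sub_cancel]
      abel
  exact (Matrix.isUnit_nonsing_inv_iff.mpr ((Matrix.isUnit_iff_isUnit_det S).mpr hSdet)).mul
    hunit
end

section
/- Let A be an n×n symmetric real matrix, M an n×n symmetric positive definite real matrix, B an m×n real matrix and C an n×m real matrix with A·C = 0, M·C = Bᵀ, L := B·C invertible, the column space of C equal to the kernel of A, and ker(A) + ker(B) = ℝ^n. Suppose there is a real constant ᾱ > 0 such that uᵀ·A·u ≥ ᾱ·uᵀ·M·u for all u ∈ ℝ^n with B·u = 0. Then for all real numbers k and η with η > k² and k² < ᾱ, the matrix A + η·Bᵀ·L⁻¹·B − k²·M is symmetric positive definite. -/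
open Matrix

theorem stmt12 {n m : ℕ} (hn : 0 < n) (hm : 0 < m) (ᾱ : ℝ)
    (A M : Matrix (Fin n) (Fin n) ℝ) (B : Matrix (Fin m) (Fin n) ℝ)
    (C : Matrix (Fin n) (Fin m) ℝ)
    (hA : Aᵀ = A) (hM : M.PosDef)
    (hAC : A * C = 0) (hMC : M * C = Bᵀ)
    (hL : IsUnit (B * C))
    (hrange : LinearMap.range C.mulVecLin = LinearMap.ker A.mulVecLin)
    (hsum : LinearMap.ker A.mulVecLin ⊔ LinearMap.ker B.mulVecLin = ⊤)
    (hᾱ : 0 < ᾱ)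
    (hcoer : ∀ u : Fin n → ℝ, B *ᵥ u = 0 →
      ᾱ * (u ⬝ᵥ (M *ᵥ u)) ≤ u ⬝ᵥ (A *ᵥ u)) :
    ∀ k η : ℝ, k ^ 2 < η → k ^ 2 < ᾱ →
      (A + η • (Bᵀ * (B * C)⁻¹ * B) - k ^ 2 • M).PosDef := by
  intro k η hkη hkᾱ
  have hMsymm : Mᵀ = M := hM.1
  have hB : Cᵀ * M = B := by
    have := congrArg Matrix.transpose hMC
    rw [transpose_mul, hMsymm, transpose_transpose] at this
    exact this
  have hLsym : (B * C)ᵀ = B * C := by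
    rw [transpose_mul, ← hB, transpose_mul, transpose_transpose, hMsymm, Matrix.mul_assoc]
  have hLdet : IsUnit (B * C).det := (Matrix.isUnit_iff_isUnit_det _).mp hL
  have hinv : (B * C)⁻¹ * (B * C) = 1 := Matrix.nonsing_inv_mul _ hLdet
  have hinvT : ((B * C)⁻¹)ᵀ = (B * C)⁻¹ := by
    rw [Matrix.transpose_nonsing_inv, hLsym]
  rw [posDef_iff_dotProduct_mulVec]
  constructor
  · show _ = _
    have hT : (A + η • (Bᵀ * (B * C)⁻¹ * B) - k ^ 2 • M)ᵀ
        = A + η • (Bᵀ * (B * C)⁻¹ * B) - k ^ 2 • M := by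
      rw [transpose_sub, transpose_add, transpose_smul, transpose_smul, hA, hMsymm,
        transpose_mul, transpose_mul, transpose_transpose, hinvT, Matrix.mul_assoc]
    ext i j
    simp only [conjTranspose_apply, star_trivial]
    exact congrFun (congrFun hT i) j
  · intro x hx
    have hxmem : x ∈ LinearMap.ker A.mulVecLin ⊔ LinearMap.ker B.mulVecLin := by
      rw [hsum]; trivial
    obtain ⟨a, ha, b, hb, hab⟩ := Submodule.mem_sup.mp hxmem
    rw [← hrange] at ha
    obtain ⟨y, hy⟩ := ha
    rw [Matrix.mulVecLin_apply] at hy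
    have hBb : B *ᵥ b = 0 := hb
    have hAa : A *ᵥ a = 0 := by
      rw [← hy, mulVec_mulVec, hAC, zero_mulVec]
    have hAb : b ∈ LinearMap.ker A.mulVecLin ⊔ LinearMap.ker B.mulVecLin := by
      rw [hsum]; trivial
    -- key scalar identities
    have key1 : x ⬝ᵥ (A *ᵥ x) = b ⬝ᵥ (A *ᵥ b) := by
      rw [← hab, mulVec_add, hAa, zero_add, add_dotProduct]
      have : a ⬝ᵥ (A *ᵥ b) = 0 := by
        rw [dotProduct_mulVec, ← mulVec_transpose, hA, hAa, zero_dotProduct]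
      rw [this, zero_add]
    have hcrossa : b ⬝ᵥ (M *ᵥ a) = 0 := by
      rw [← hy, mulVec_mulVec, hMC, mulVec_transpose, dotProduct_comm,
        ← dotProduct_mulVec, hBb, dotProduct_zero]
    have key3 : x ⬝ᵥ (M *ᵥ x) = a ⬝ᵥ (M *ᵥ a) + b ⬝ᵥ (M *ᵥ b) := by
      have hcrossb : a ⬝ᵥ (M *ᵥ b) = 0 := by
        rw [dotProduct_mulVec, ← mulVec_transpose, hMsymm, ← dotProduct_comm, hcrossa]
      rw [← hab, mulVec_add, add_dotProduct, dotProduct_add, dotProduct_add,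
        hcrossa, hcrossb]
      ring
    have key2 : x ⬝ᵥ ((Bᵀ * (B * C)⁻¹ * B) *ᵥ x) = a ⬝ᵥ (M *ᵥ a) := by
      have hBx : B *ᵥ x = (B * C) *ᵥ y := by
        rw [← hab, mulVec_add, hBb, add_zero, ← hy, mulVec_mulVec]
      calc x ⬝ᵥ ((Bᵀ * (B * C)⁻¹ * B) *ᵥ x)
          = (B *ᵥ x) ⬝ᵥ ((B * C)⁻¹ *ᵥ (B *ᵥ x)) := by
            rw [← mulVec_mulVec, ← mulVec_mulVec, dotProduct_mulVec (w := (B * C)⁻¹ *ᵥ (B *ᵥ x)),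
              ← mulVec_transpose, transpose_transpose]
        _ = ((B * C) *ᵥ y) ⬝ᵥ y := by
            rw [hBx, mulVec_mulVec, hinv, one_mulVec]
        _ = a ⬝ᵥ (M *ᵥ a) := by
            rw [← hy, mulVec_mulVec, ← hB, Matrix.mul_assoc, ← mulVec_mulVec,
              mulVec_transpose, ← dotProduct_mulVec, dotProduct_comm,
              dotProduct_mulVec]
    have hexp : star x ⬝ᵥ ((A + η • (Bᵀ * (B * C)⁻¹ * B) - k ^ 2 • M) *ᵥ x)
        = b ⬝ᵥ (A *ᵥ b) + η * (a ⬝ᵥ (M *ᵥ a))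
          - k ^ 2 * (a ⬝ᵥ (M *ᵥ a) + b ⬝ᵥ (M *ᵥ b)) := by
      rw [star_trivial, sub_mulVec, add_mulVec, smul_mulVec, smul_mulVec,
        dotProduct_sub, dotProduct_add, dotProduct_smul, dotProduct_smul,
        key1, key2, key3]
      simp [smul_eq_mul]
    rw [hexp]
    have hcoerb := hcoer b hBb
    have hMa : 0 ≤ a ⬝ᵥ (M *ᵥ a) := by
      have := hM.posSemidef.dotProduct_mulVec_nonneg a
      simpa using this
    have hMb : 0 ≤ b ⬝ᵥ (M *ᵥ b) := by
      have := hM.posSemidef.dotProduct_mulVec_nonneg b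
      simpa using this
    have hpos : a ≠ 0 ∨ b ≠ 0 := by
      by_contra h
      push_neg at h
      apply hx
      rw [← hab, h.1, h.2, add_zero]
    rcases hpos with h | h
    · have : 0 < a ⬝ᵥ (M *ᵥ a) := by
        have := hM.dotProduct_mulVec_pos h
        simpa using this
      nlinarith
    · have : 0 < b ⬝ᵥ (M *ᵥ b) := by
        have := hM.dotProduct_mulVec_pos h
        simpa using this
      nlinarith
end

section
/- Let A be an n×n real matrix, M an n×n real matrix, B an m×n real matrix and C an n×m real matrix with A·C = 0, M·C = Bᵀ, L := B·C invertible, and A + (η − k²)·M invertible for real numbers k and η. Then the matrix W := (A + (η − k²)·M)⁻¹·(A + η·Bᵀ·L⁻¹·B − k²·M) satisfies W·C = C; consequently, since the linear map x ↦ C·x is injective (because L = B·C is invertible), λ = 1 is an eigenvalue of W whose eigenspace {v ∈ ℝ^n : W·v = v} has dimension at least m. -/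
open Matrix

theorem stmt14 {n m : ℕ} (hn : 0 < n) (hm : 0 < m) (k η : ℝ)
    (A M : Matrix (Fin n) (Fin n) ℝ) (B : Matrix (Fin m) (Fin n) ℝ)
    (C : Matrix (Fin n) (Fin m) ℝ)
    (hAC : A * C = 0) (hMC : M * C = Bᵀ)
    (hL : IsUnit (B * C))
    (hInv : IsUnit (A + (η - k ^ 2) • M))
    (W : Matrix (Fin n) (Fin n) ℝ)
    (hW : W = (A + (η - k ^ 2) • M)⁻¹ *
      (A + η • (Bᵀ * (B * C)⁻¹ * B) - k ^ 2 • M)) :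
    W * C = C ∧
      m ≤ Module.finrank ℝ
        ↥(LinearMap.ker (W.mulVecLin - LinearMap.id)) := by
  have hWC : W * C = C := by
    have h1 : (A + η • (Bᵀ * (B * C)⁻¹ * B) - k ^ 2 • M) * C
        = (A + (η - k ^ 2) • M) * C := by
      have hBC : Bᵀ * (B * C)⁻¹ * (B * C) = Bᵀ := by
        rw [Matrix.mul_assoc, Matrix.nonsing_inv_mul _ ((Matrix.isUnit_iff_isUnit_det _).mp hL),
          Matrix.mul_one]
      rw [Matrix.sub_mul, Matrix.add_mul, Matrix.add_mul, hAC, Matrix.smul_mul,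
        Matrix.smul_mul, Matrix.smul_mul, hMC, Matrix.mul_assoc (Bᵀ * (B * C)⁻¹) B C, hBC, sub_smul]
      module
    rw [hW, Matrix.mul_assoc, h1, ← Matrix.mul_assoc,
      Matrix.nonsing_inv_mul _ ((Matrix.isUnit_iff_isUnit_det _).mp hInv), Matrix.one_mul]
  refine ⟨hWC, ?_⟩
  have hinj : Function.Injective C.mulVecLin := by
    have h2 : Function.Injective ((B * C).mulVec) :=
      Matrix.mulVec_injective_iff_isUnit.2 hL
    intro x y hxy
    apply h2
    rw [← Matrix.mulVec_mulVec, ← Matrix.mulVec_mulVec]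
    simpa [Matrix.mulVecLin_apply] using congrArg (B.mulVec) hxy
  have hrange : LinearMap.range C.mulVecLin ≤
      LinearMap.ker (W.mulVecLin - LinearMap.id) := by
    rintro x ⟨v, rfl⟩
    simp only [LinearMap.mem_ker, LinearMap.sub_apply, LinearMap.id_apply,
      Matrix.mulVecLin_apply, sub_eq_zero]
    rw [Matrix.mulVec_mulVec, hWC]
  calc m = Module.finrank ℝ (LinearMap.range C.mulVecLin) := by
        rw [LinearMap.finrank_range_of_inj hinj]; simp
    _ ≤ _ := Submodule.finrank_mono hrange
end

section
/- Let A be an n×n symmetric real matrix, M an n×n symmetric real matrix, B an m×n real matrix and C an n×m real matrix with A·C = 0, M·C = Bᵀ, L := B·C invertible, and A + Bᵀ·L⁻¹·B invertible; set V := (A + Bᵀ·L⁻¹·B)⁻¹·(I − Bᵀ·L⁻¹·Cᵀ). Then for any m×m real matrix D, the block matrix [[A, Bᵀ],[B, D]] multiplied by [[V − C·L⁻¹·D·L⁻¹·Cᵀ, C·L⁻¹],[L⁻¹·Cᵀ, 0]] equals the identity; in particular [[A, Bᵀ],[B, D]] is invertible and its inverse does not involve the inverse of D. -/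
open Matrix

theorem stmt16 {n m : ℕ} (hn : 0 < n) (hm : 0 < m)
    (A M : Matrix (Fin n) (Fin n) ℝ) (B : Matrix (Fin m) (Fin n) ℝ)
    (C : Matrix (Fin n) (Fin m) ℝ)
    (hA : Aᵀ = A) (hM : Mᵀ = M)
    (hAC : A * C = 0) (hMC : M * C = Bᵀ)
    (hL : IsUnit (B * C))
    (hInv : IsUnit (A + Bᵀ * (B * C)⁻¹ * B))
    (V : Matrix (Fin n) (Fin n) ℝ)
    (hV : V = (A + Bᵀ * (B * C)⁻¹ * B)⁻¹ * (1 - Bᵀ * (B * C)⁻¹ * Cᵀ))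
    (D : Matrix (Fin m) (Fin m) ℝ) :
    (Matrix.fromBlocks A Bᵀ B D) *
        (Matrix.fromBlocks (V - C * (B * C)⁻¹ * D * (B * C)⁻¹ * Cᵀ)
          (C * (B * C)⁻¹) ((B * C)⁻¹ * Cᵀ) 0) = 1 ∧
      IsUnit (Matrix.fromBlocks A Bᵀ B D) ∧
      (Matrix.fromBlocks A Bᵀ B D)⁻¹ =
        Matrix.fromBlocks (V - C * (B * C)⁻¹ * D * (B * C)⁻¹ * Cᵀ)
          (C * (B * C)⁻¹) ((B * C)⁻¹ * Cᵀ) 0 := by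
  set L := B * C with hLdef
  set K := A + Bᵀ * L⁻¹ * B with hKdef
  have hLd : IsUnit L.det := (isUnit_iff_isUnit_det L).mp hL
  have hKd : IsUnit K.det := (isUnit_iff_isUnit_det K).mp hInv
  have hLL : L * L⁻¹ = 1 := mul_nonsing_inv L hLd
  have hLL' : L⁻¹ * L = 1 := nonsing_inv_mul L hLd
  -- L is symmetric
  have hCB : Cᵀ * Bᵀ = Cᵀ * M * C := by rw [← hMC, Matrix.mul_assoc]
  have hLsym : Lᵀ = L := by
    have h1 : Lᵀ = Cᵀ * M * C := by rw [hLdef, transpose_mul, hCB]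
    have h2 : (Cᵀ * M * C)ᵀ = Cᵀ * M * C := by
      rw [transpose_mul, transpose_mul, transpose_transpose, hM,
        Matrix.mul_assoc]
    rw [h1, ← h2, ← h1, transpose_transpose]
  have hLinvSym : (L⁻¹)ᵀ = L⁻¹ := by
    rw [transpose_nonsing_inv, hLsym]
  have hKsym : Kᵀ = K := by
    rw [hKdef, transpose_add, hA, transpose_mul, transpose_mul, hLinvSym,
      transpose_transpose, Matrix.mul_assoc]
  -- K * C = Bᵀ
  have hKC : K * C = Bᵀ := by
    rw [hKdef, Matrix.add_mul, hAC, Matrix.mul_assoc, Matrix.mul_assoc,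
      ← hLdef, hLL', Matrix.mul_one, zero_add]
  have hCKinv : K⁻¹ * Bᵀ = C := by
    rw [← hKC, ← Matrix.mul_assoc, nonsing_inv_mul K hKd, Matrix.one_mul]
  have hBKinv : B * K⁻¹ = Cᵀ := by
    have := congrArg transpose hCKinv
    rwa [transpose_mul, transpose_transpose, transpose_nonsing_inv, hKsym]
      at this
  have hBV : B * V = 0 := by
    rw [hV, ← Matrix.mul_assoc, hBKinv, Matrix.mul_sub, Matrix.mul_one,
      ← Matrix.mul_assoc, ← Matrix.mul_assoc, ← transpose_mul,
      hLsym, Matrix.mul_assoc, ← Matrix.mul_assoc, hLL, Matrix.one_mul,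
      sub_self]
  have hAV : A * V = 1 - Bᵀ * L⁻¹ * Cᵀ := by
    have hKV : K * V = 1 - Bᵀ * L⁻¹ * Cᵀ := by
      rw [hV, ← Matrix.mul_assoc, mul_nonsing_inv K hKd, Matrix.one_mul]
    have h3 : A * V = K * V - Bᵀ * L⁻¹ * (B * V) := by
      rw [hKdef, Matrix.add_mul, Matrix.mul_assoc, add_sub_cancel_right]
    rw [h3, hKV, hBV, Matrix.mul_zero, sub_zero]
  have key : (Matrix.fromBlocks A Bᵀ B D) *
      (Matrix.fromBlocks (V - C * L⁻¹ * D * L⁻¹ * Cᵀ)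
        (C * L⁻¹) (L⁻¹ * Cᵀ) 0) = 1 := by
    rw [fromBlocks_multiply, ← fromBlocks_one, fromBlocks_inj]
    refine ⟨?_, ?_, ?_, ?_⟩
    · simp only [Matrix.mul_sub, ← Matrix.mul_assoc, hAC, Matrix.zero_mul,
        hAV, sub_zero]
      abel
    · simp only [← Matrix.mul_assoc, hAC, Matrix.zero_mul, Matrix.mul_zero,
        add_zero]
    · simp only [Matrix.mul_sub, ← Matrix.mul_assoc, hBV, ← hLdef, hLL,
        Matrix.one_mul, zero_sub]
      abel
    · simp only [← Matrix.mul_assoc, ← hLdef, hLL, Matrix.mul_zero, add_zero]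
  refine ⟨key, ?_, ?_⟩
  · have key2 := mul_eq_one_comm.mp key
    exact ⟨⟨_, _, key, key2⟩, rfl⟩
  · exact inv_eq_right_inv key
end

section
/- Let A be an n×n symmetric real matrix, M an n×n symmetric real matrix, B an m×n real matrix and C an n×m real matrix with A·C = 0, M·C = Bᵀ, L := B·C invertible, and let η be a real number such that A + η·M is invertible. Then for any m×m real matrix D, the block matrix product [[(A + η·M)⁻¹·(I − Bᵀ·L⁻¹·Cᵀ) − C·L⁻¹·D·L⁻¹·Cᵀ, C·L⁻¹],[L⁻¹·Cᵀ, 0]] · [[A, Bᵀ],[B, D]] equals the block diagonal matrix [[(A + η·M)⁻¹·(A + η·Bᵀ·L⁻¹·B), 0],[0, I_m]]. -/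
open Matrix

theorem stmt17 {n m : ℕ} (hn : 0 < n) (hm : 0 < m) (η : ℝ)
    (A M : Matrix (Fin n) (Fin n) ℝ) (B : Matrix (Fin m) (Fin n) ℝ)
    (C : Matrix (Fin n) (Fin m) ℝ)
    (hA : Aᵀ = A) (hM : Mᵀ = M)
    (hAC : A * C = 0) (hMC : M * C = Bᵀ)
    (hL : IsUnit (B * C))
    (hInv : IsUnit (A + η • M))
    (D : Matrix (Fin m) (Fin m) ℝ) :
    (Matrix.fromBlocks
        ((A + η • M)⁻¹ * (1 - Bᵀ * (B * C)⁻¹ * Cᵀ) -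
          C * (B * C)⁻¹ * D * (B * C)⁻¹ * Cᵀ)
        (C * (B * C)⁻¹) ((B * C)⁻¹ * Cᵀ) 0) *
      (Matrix.fromBlocks A Bᵀ B D) =
    Matrix.fromBlocks
      ((A + η • M)⁻¹ * (A + η • (Bᵀ * (B * C)⁻¹ * B)))
      0 0 (1 : Matrix (Fin m) (Fin m) ℝ) := by
  set L := B * C with hLdef
  have hCtA : Cᵀ * A = 0 := by
    have : (A * C)ᵀ = 0 := by rw [hAC]; simp
    rwa [transpose_mul, hA] at this
  have hCtM : Cᵀ * M = B := by
    have : (M * C)ᵀ = Bᵀᵀ := by rw [hMC]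
    rwa [transpose_mul, hM, transpose_transpose] at this
  have hCtBt : Cᵀ * Bᵀ = L := by
    rw [← hMC, ← Matrix.mul_assoc, hCtM]
  have hKL : L⁻¹ * L = 1 :=
    Matrix.nonsing_inv_mul L ((Matrix.isUnit_iff_isUnit_det L).mp hL)
  have hPAM : (A + η • M)⁻¹ * (A + η • M) = 1 :=
    Matrix.nonsing_inv_mul _ ((Matrix.isUnit_iff_isUnit_det _).mp hInv)
  have hAMC : (A + η • M) * C = η • Bᵀ := by
    rw [Matrix.add_mul, hAC, Matrix.smul_mul, hMC, zero_add]
  have h1 : (A + η • M)⁻¹ * (η • (Bᵀ * (L⁻¹ * B))) = C * (L⁻¹ * B) := by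
    calc (A + η • M)⁻¹ * (η • (Bᵀ * (L⁻¹ * B)))
        = (A + η • M)⁻¹ * ((η • Bᵀ) * (L⁻¹ * B)) := by rw [Matrix.smul_mul]
      _ = (A + η • M)⁻¹ * ((A + η • M) * (C * (L⁻¹ * B))) := by
          rw [← hAMC]; simp only [Matrix.mul_assoc]
      _ = C * (L⁻¹ * B) := by rw [← Matrix.mul_assoc, hPAM, Matrix.one_mul]
  rw [Matrix.fromBlocks_multiply]
  have h11 : ((A + η • M)⁻¹ * (1 - Bᵀ * L⁻¹ * Cᵀ) - C * L⁻¹ * D * L⁻¹ * Cᵀ) * A +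
      C * L⁻¹ * B = (A + η • M)⁻¹ * (A + η • (Bᵀ * L⁻¹ * B)) := by
    simp only [Matrix.sub_mul, Matrix.mul_sub, Matrix.one_mul, Matrix.mul_assoc, hCtA,
      Matrix.mul_zero, sub_zero, Matrix.mul_add, h1]
  have h12 : ((A + η • M)⁻¹ * (1 - Bᵀ * L⁻¹ * Cᵀ) - C * L⁻¹ * D * L⁻¹ * Cᵀ) * Bᵀ +
      C * L⁻¹ * D = 0 := by
    simp only [Matrix.sub_mul, Matrix.mul_sub, Matrix.one_mul, Matrix.mul_assoc, hCtBt,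
      hKL, Matrix.mul_one]
    abel
  have h21 : L⁻¹ * Cᵀ * A + (0 : Matrix (Fin m) (Fin m) ℝ) * B = 0 := by
    simp [Matrix.mul_assoc, hCtA]
  have h22 : L⁻¹ * Cᵀ * Bᵀ + (0 : Matrix (Fin m) (Fin m) ℝ) * D = 1 := by
    simp [Matrix.mul_assoc, hCtBt, hKL]
  rw [h11, h12, h21, h22]
end

section
/- Let A be an m×n real matrix and C_l a k×m real matrix with C_l·A = 0, and suppose the column spaces of A and of C_lᵀ together span ℝ^m (the sum of the ranges of the linear maps x ↦ A·x and y ↦ C_lᵀ·y is all of ℝ^m). Let X be an n×m matrix satisfying the Moore–Penrose equations for A (X·A·X = X, A·X·A = A, (A·X)ᵀ = A·X, (X·A)ᵀ = X·A) and let Y be an m×k matrix satisfying the Moore–Penrose equations for C_l (Y·C_l·Y = Y, C_l·Y·C_l = C_l, (C_l·Y)ᵀ = C_l·Y, (Y·C_l)ᵀ = Y·C_l). Then I_m − A·X = Y·C_l. -/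
open Matrix

theorem stmt18 {m n k : ℕ} (hm : 0 < m) (hn : 0 < n) (hk : 0 < k)
    (A : Matrix (Fin m) (Fin n) ℝ) (Cl : Matrix (Fin k) (Fin m) ℝ)
    (hClA : Cl * A = 0)
    (hspan : LinearMap.range A.mulVecLin ⊔ LinearMap.range (Clᵀ).mulVecLin = ⊤)
    (X : Matrix (Fin n) (Fin m) ℝ)
    (hX1 : X * A * X = X) (hX2 : A * X * A = A)
    (hX3 : (A * X)ᵀ = A * X) (hX4 : (X * A)ᵀ = X * A)
    (Y : Matrix (Fin m) (Fin k) ℝ)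
    (hY1 : Y * Cl * Y = Y) (hY2 : Cl * Y * Cl = Cl)
    (hY3 : (Cl * Y)ᵀ = Cl * Y) (hY4 : (Y * Cl)ᵀ = Y * Cl) :
    (1 : Matrix (Fin m) (Fin m) ℝ) - A * X = Y * Cl := by
  set M : Matrix (Fin m) (Fin m) ℝ := 1 - A * X - Y * Cl with hM
  have hAtCt : Aᵀ * Clᵀ = 0 := by
    rw [← Matrix.transpose_mul, hClA, transpose_zero]
  have hMA : M * A = 0 := by
    have h2 : Y * Cl * A = 0 := by rw [Matrix.mul_assoc, hClA, Matrix.mul_zero]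
    rw [hM, Matrix.sub_mul, Matrix.sub_mul, Matrix.one_mul, hX2, h2, sub_zero, sub_self]
  have hMCl : M * Clᵀ = 0 := by
    have h1 : A * X * Clᵀ = 0 := by
      rw [← hX3, Matrix.transpose_mul, Matrix.mul_assoc, hAtCt, Matrix.mul_zero]
    have h2 : Y * Cl * Clᵀ = Clᵀ := by
      have := congrArg transpose hY2
      rwa [Matrix.mul_assoc, Matrix.transpose_mul, hY4] at this
    rw [hM, Matrix.sub_mul, Matrix.sub_mul, Matrix.one_mul, h1, h2, sub_zero, sub_self]
  have key : ∀ v : Fin m → ℝ, M *ᵥ v = 0 := by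
    intro v
    have hv : v ∈ LinearMap.range A.mulVecLin ⊔ LinearMap.range (Clᵀ).mulVecLin := by
      rw [hspan]; trivial
    obtain ⟨a, ⟨x, hx⟩, b, ⟨y, hy⟩, hab⟩ := Submodule.mem_sup.mp hv
    have : M *ᵥ v = M *ᵥ a + M *ᵥ b := by rw [← hab, mulVec_add]
    rw [this, ← hx, ← hy]
    simp only [mulVecLin_apply, mulVec_mulVec, hMA, hMCl, zero_mulVec, add_zero]
  have hM0 : M = 0 := by
    ext i j
    have := congrFun (key (Pi.single j 1)) i
    simpa using this
  have h := sub_eq_zero.mp hM0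
  exact h
end

section
/- Let m, n, k, l be positive integers, and let A be an m×n real matrix, B an m×k real matrix, C an l×n real matrix and D an l×k real matrix such that the block matrix 𝒦 := [[A, B],[C, D]] induces a bijective linear map from ℝ^n × ℝ^k to ℝ^m × ℝ^l. Let C_l be a k×m real matrix of full row rank (the map x ↦ C_lᵀ·x from ℝ^k to ℝ^m is injective) with C_l·A = 0. Then the k×k matrix L_l := C_l·B is invertible. -/
open Matrix

theorem stmt19 {m n k l : ℕ} (hm : 0 < m) (hn : 0 < n) (hk : 0 < k) (hl : 0 < l)
    (A : Matrix (Fin m) (Fin n) ℝ) (B : Matrix (Fin m) (Fin k) ℝ)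
    (C : Matrix (Fin l) (Fin n) ℝ) (D : Matrix (Fin l) (Fin k) ℝ)
    (hK : Function.Bijective (Matrix.fromBlocks A B C D).mulVecLin)
    (Cl : Matrix (Fin k) (Fin m) ℝ)
    (hfull : Function.Injective (Clᵀ).mulVecLin)
    (hClA : Cl * A = 0) :
    IsUnit (Cl * B) := by
  rw [← Matrix.vecMul_injective_iff_isUnit]
  show Function.Injective ⇑((Cl * B).vecMulLinear)
  rw [← LinearMap.ker_eq_bot, LinearMap.ker_eq_bot']
  intro y hy
  rw [Matrix.vecMulLinear_apply] at hy
  -- build left null vector of K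
  set K := Matrix.fromBlocks A B C D with hKdef
  have hw : (Sum.elim (y ᵥ* Cl) (0 : Fin l → ℝ)) ᵥ* K = 0 := by
    rw [hKdef, Matrix.vecMul_fromBlocks]
    have h1 : (y ᵥ* Cl) ᵥ* A = y ᵥ* (Cl * A) := Matrix.vecMul_vecMul y Cl A
    have h2 : (y ᵥ* Cl) ᵥ* B = y ᵥ* (Cl * B) := Matrix.vecMul_vecMul y Cl B
    simp [h1, h2, hClA, hy]
  -- w ⟂ range of K.mulVec, which is everything
  have hzero : Sum.elim (y ᵥ* Cl) (0 : Fin l → ℝ) = 0 := by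
    set w := Sum.elim (y ᵥ* Cl) (0 : Fin l → ℝ) with hwdef
    have hperp : w ⬝ᵥ w = 0 := by
      obtain ⟨v, hv⟩ := hK.2 w
      have : w ⬝ᵥ (K *ᵥ v) = (w ᵥ* K) ⬝ᵥ v := Matrix.dotProduct_mulVec w K v
      rw [hw, zero_dotProduct] at this
      rw [show (K *ᵥ v) = w from hv] at this
      exact this
    exact (dotProduct_self_eq_zero).mp hperp
  have hyCl : y ᵥ* Cl = 0 := by
    funext i
    exact congrFun hzero (Sum.inl i)
  -- use full row rank
  have : Clᵀ.mulVecLin y = 0 := by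
    simp [Matrix.mulVecLin_apply, ← Matrix.vecMul_transpose, hyCl]
  have h0 : Clᵀ.mulVecLin 0 = 0 := map_zero _
  exact hfull (this.trans h0.symm)
end
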